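/- arXiv:0912.4533 — 4 statements merged into one kernel-verified Lean document; each statement's English description precedes it below -/
import Mathlib

section
/- Decomposition of upward truncated variation at the first drawdown time: for every μ ∈ ℝ, c > 0 and T > 0, almost surely UTV_μ^c[0,T] = sup_{0 ≤ t < s ≤ T_c ∧ T} (W_s − W_t − c)_+ + UTV_μ^c[T_c, T]. -/
open MeasureTheory ProbabilityTheory Real Set

noncomputable section

/-- A standard Brownian motion on a probability space: starts at `0`, has continuous paths,
Gaussian increments with variance equal to the elapsed time, and independent increments. -/
structure IsStdBrownianMotion {Ω : Type*} [MeasurableSpace Ω] (P : Measure Ω)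
    (B : ℝ → Ω → ℝ) : Prop where
  meas : ∀ t : ℝ, Measurable (B t)
  start : ∀ᵐ ω ∂P, B 0 ω = 0
  cont : ∀ᵐ ω ∂P, Continuous fun t => B t ω
  gauss_incr : ∀ s t : ℝ, 0 ≤ s → s ≤ t →
    P.map (fun ω => B t ω - B s ω) = gaussianReal 0 (Real.toNNReal (t - s))
  indep_incr : ∀ (n : ℕ) (t : Fin (n + 1) → ℝ), Monotone t → (∀ i, 0 ≤ t i) →
    iIndepFun
      (fun i : Fin n => fun ω => B (t i.succ) ω - B (t i.castSucc) ω) P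

/-- Truncated variation of a path `f` at level `c` over the interval `[a, b]`:
`TV f c a b = sup_n sup_{a ≤ t₁ ≤ ⋯ ≤ t_n ≤ b} ∑ max (|f t_{i+1} - f t_i| - c) 0`.
For `a > b` this is `0` (the supremum of the empty set). -/
def TV (f : ℝ → ℝ) (c a b : ℝ) : ℝ :=
  sSup {x | ∃ (n : ℕ) (t : Fin (n + 1) → ℝ), Monotone t ∧ (∀ i, t i ∈ Set.Icc a b) ∧
    x = ∑ i : Fin n, max (|f (t i.succ) - f (t i.castSucc)| - c) 0}

/-- Upward truncated variation of a path `f` at level `c` over the interval `[a, b]`: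
`UTV f c a b = sup_n sup_{a ≤ t₁ < s₁ < ⋯ < t_n < s_n ≤ b} ∑ max (f s_i - f t_i - c) 0`. -/
def UTV (f : ℝ → ℝ) (c a b : ℝ) : ℝ :=
  sSup {x | ∃ (n : ℕ) (t s : Fin n → ℝ),
    (∀ i, a ≤ t i) ∧ (∀ i, s i ≤ b) ∧ (∀ i, t i < s i) ∧
    (∀ i j : Fin n, i < j → s i < t j) ∧
    x = ∑ i : Fin n, max (f (s i) - f (t i) - c) 0}

/-- Downward truncated variation of a path `f` at level `c` over the interval `[a, b]`:
`DTV f c a b = sup_n sup_{a ≤ t₁ < s₁ < ⋯ < t_n < s_n ≤ b} ∑ max (f t_i - f s_i - c) 0`. -/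
def DTV (f : ℝ → ℝ) (c a b : ℝ) : ℝ :=
  sSup {x | ∃ (n : ℕ) (t s : Fin n → ℝ),
    (∀ i, a ≤ t i) ∧ (∀ i, s i ≤ b) ∧ (∀ i, t i < s i) ∧
    (∀ i j : Fin n, i < j → s i < t j) ∧
    x = ∑ i : Fin n, max (f (t i) - f (s i) - c) 0}

/-- The first time the drawdown of the path `f` reaches level `c`:
`Tc f c = inf {t ≥ 0 : sup_{0 ≤ s ≤ t} f s ≥ f t + c}`. -/
def Tc (f : ℝ → ℝ) (c : ℝ) : ℝ :=
  sInf {t | 0 ≤ t ∧ f t + c ≤ sSup (f '' Set.Icc 0 t)}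

/-- The successive drawdown times `T_c^{(i)}`: `TcIter f c 0 = 0` and
`TcIter f c (i+1) = inf {t > TcIter f c i : sup_{TcIter f c i ≤ s ≤ t} f s ≥ f t + c}`. -/
def TcIter (f : ℝ → ℝ) (c : ℝ) : ℕ → ℝ
  | 0 => 0
  | n + 1 => sInf {t | TcIter f c n < t ∧ f t + c ≤ sSup (f '' Set.Icc (TcIter f c n) t)}

/-- `sup_{a ≤ t < s ≤ b} (f s - f t - c)₊`. -/
def maxGainLT (f : ℝ → ℝ) (c a b : ℝ) : ℝ :=
  sSup {x | ∃ t s : ℝ, a ≤ t ∧ t < s ∧ s ≤ b ∧ x = max (f s - f t - c) 0}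

/-- `sup_{a ≤ t ≤ s ≤ b} (f s - f t - c)₊`. -/
def maxGainLE (f : ℝ → ℝ) (c a b : ℝ) : ℝ :=
  sSup {x | ∃ t s : ℝ, a ≤ t ∧ t ≤ s ∧ s ≤ b ∧ x = max (f s - f t - c) 0}

/-- The discounted series
`UTVser f c T = ∑_{i=1}^∞ e^{-T_c^{(i-1)}/T} · sup_{T_c^{(i-1)} ≤ t < s ≤ T_c^{(i)} ∧ (T_c^{(i-1)}+T)} (f s - f t - c)₊`. -/
def UTVser (f : ℝ → ℝ) (c T : ℝ) : ℝ :=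
  ∑' i : ℕ, Real.exp (-(TcIter f c i) / T) *
    maxGainLT f c (TcIter f c i) (min (TcIter f c (i + 1)) (TcIter f c i + T))

/-- The last instant at which the maximum of `f` on `[0, Tc f c]` is attained. -/
def TcSup (f : ℝ → ℝ) (c : ℝ) : ℝ :=
  sSup {t | t ∈ Set.Icc 0 (Tc f c) ∧ f t = sSup (f '' Set.Icc 0 (Tc f c))}

end
namespace UTVAux
open Set List

noncomputable section

def tm (f : ℝ → ℝ) (c : ℝ) (p : ℝ × ℝ) : ℝ := max (f p.2 - f p.1 - c) 0

def lsum (f : ℝ → ℝ) (c : ℝ) (l : List (ℝ × ℝ)) : ℝ := (l.map (tm f c)).sum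

def Good (a b : ℝ) (l : List (ℝ × ℝ)) : Prop :=
  (∀ p ∈ l, a ≤ p.1 ∧ p.1 < p.2 ∧ p.2 ≤ b) ∧ l.Pairwise (fun p q => p.2 < q.1)

def LSet (f : ℝ → ℝ) (c a b : ℝ) : Set ℝ := {x | ∃ l, Good a b l ∧ x = lsum f c l}

def BSet (f : ℝ → ℝ) (c a b : ℝ) : Set ℝ :=
  {x | ∃ t s : ℝ, a ≤ t ∧ t < s ∧ s ≤ b ∧ x = max (f s - f t - c) 0}

lemma maxGainLT_eq (f : ℝ → ℝ) (c a b : ℝ) : maxGainLT f c a b = sSup (BSet f c a b) := rfl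

lemma tm_nonneg (f : ℝ → ℝ) (c : ℝ) (p : ℝ × ℝ) : 0 ≤ tm f c p := le_max_right _ _

lemma lsum_nonneg (f : ℝ → ℝ) (c : ℝ) (l : List (ℝ × ℝ)) : 0 ≤ lsum f c l := by
  apply List.sum_nonneg
  intro x hx
  rw [List.mem_map] at hx
  obtain ⟨p, _, rfl⟩ := hx
  exact tm_nonneg f c p

lemma zero_mem_LSet (f : ℝ → ℝ) (c a b : ℝ) : (0 : ℝ) ∈ LSet f c a b :=
  ⟨[], ⟨by simp, by simp⟩, by simp [lsum]⟩

lemma good_mono {a b a' b' : ℝ} {l : List (ℝ × ℝ)} (h : Good a' b' l) (ha : a ≤ a')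
    (hb : b' ≤ b) : Good a b l :=
  ⟨fun p hp => ⟨le_trans ha (h.1 p hp).1, (h.1 p hp).2.1, le_trans (h.1 p hp).2.2 hb⟩, h.2⟩

lemma UTV_eq (f : ℝ → ℝ) (c a b : ℝ) : UTV f c a b = sSup (LSet f c a b) := by
  unfold UTV LSet
  congr 1
  ext x
  constructor
  · rintro ⟨n, t, s, h1, h2, h3, h4, rfl⟩
    refine ⟨List.ofFn (fun i => (t i, s i)), ⟨?_, ?_⟩, ?_⟩
    · intro p hp
      rw [List.mem_ofFn] at hp
      obtain ⟨i, rfl⟩ := hp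
      exact ⟨h1 i, h3 i, h2 i⟩
    · rw [List.pairwise_ofFn]
      intro i j hij
      exact h4 i j hij
    · rw [lsum, List.map_ofFn, List.sum_ofFn]
      rfl
  · rintro ⟨l, ⟨h1, h2⟩, rfl⟩
    refine ⟨l.length, fun i => (l.get i).1, fun i => (l.get i).2,
      fun i => (h1 _ (l.get_mem i)).1, fun i => (h1 _ (l.get_mem i)).2.2,
      fun i => (h1 _ (l.get_mem i)).2.1, fun i j hij => List.pairwise_iff_get.mp h2 i j hij, ?_⟩
    have hmap : l.map (tm f c) = List.ofFn (fun i => tm f c (l.get i)) := by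
      conv_lhs => rw [← List.ofFn_get l]
      rw [List.map_ofFn]
      rfl
    rw [lsum, hmap, List.sum_ofFn]
    rfl

end
end UTVAux
namespace UTVAux
open Set List

lemma len_sum_le {a b : ℝ} : ∀ {l : List (ℝ × ℝ)}, Good a b l →
    (l.map (fun p => p.2 - p.1)).sum ≤ max (b - a) 0 := by
  intro l
  induction l generalizing a with
  | nil => intro _; simp
  | cons p l ih =>
    rintro ⟨h1, h2⟩
    rw [List.pairwise_cons] at h2
    have hp := h1 p (List.mem_cons_self)
    have hgood : Good p.2 b l :=
      ⟨fun q hq => ⟨(h2.1 q hq).le, (h1 q (List.mem_cons_of_mem _ hq)).2.1,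
        (h1 q (List.mem_cons_of_mem _ hq)).2.2⟩, h2.2⟩
    have := ih hgood
    have hmax : max (b - p.2) 0 = b - p.2 := max_eq_left (by linarith [hp.2.1, hp.2.2])
    simp only [List.map_cons, List.sum_cons]
    rw [hmax] at this
    have : (p.2 - p.1) + (List.map (fun p => p.2 - p.1) l).sum ≤ b - p.1 := by linarith
    refine le_trans this (le_trans ?_ (le_max_left _ _))
    linarith [hp.1]

lemma bddAbove_BSet {f : ℝ → ℝ} (hf : Continuous f) {c : ℝ} (hc : 0 < c) (a b : ℝ) : BddAbove (BSet f c a b) := by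
  obtain ⟨K, hK⟩ := isCompact_Icc.exists_bound_of_continuousOn (s := Icc a b) hf.continuousOn
  refine ⟨max (2 * K) 0, ?_⟩
  rintro x ⟨t, s, ht, hts, hsb, rfl⟩
  have h1 := hK t ⟨ht, by linarith⟩
  have h2 := hK s ⟨by linarith, hsb⟩
  rw [Real.norm_eq_abs] at h1 h2
  have : f s - f t - c ≤ 2 * K := by
    obtain ⟨h1a, h1b⟩ := abs_le.mp h1
    obtain ⟨h2a, h2b⟩ := abs_le.mp h2
    linarith
  exact max_le_max this (le_refl 0)

lemma bddAbove_LSet {f : ℝ → ℝ} (hf : Continuous f) {c : ℝ} (hc : 0 < c) (a b : ℝ) :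
    BddAbove (LSet f c a b) := by
  obtain ⟨K, hK⟩ := isCompact_Icc.exists_bound_of_continuousOn (s := Icc a b) hf.continuousOn
  have hK' : ∀ u ∈ Icc a b, |f u| ≤ K := by intro u hu; simpa [Real.norm_eq_abs] using hK u hu
  obtain ⟨δ, hδ, hδ'⟩ := Metric.uniformContinuousOn_iff.mp
    (isCompact_Icc.uniformContinuousOn_of_continuous (s := Icc a b) hf.continuousOn) c hc
  by_cases hab : a ≤ b
  swap
  · refine ⟨0, ?_⟩
    rintro x ⟨l, ⟨h1, h2⟩, rfl⟩
    match l with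
    | [] => simp [lsum]
    | p :: l' =>
      have := h1 p (List.mem_cons_self)
      exact absurd (le_trans this.1 (le_trans this.2.1.le this.2.2)) hab
  have hK0 : 0 ≤ K := le_trans (abs_nonneg _) (hK' a ⟨le_refl a, hab⟩)
  refine ⟨(2 * K / δ) * max (b - a) 0, ?_⟩
  rintro x ⟨l, hl, rfl⟩
  have hterm : ∀ p ∈ l, tm f c p ≤ (2 * K / δ) * (p.2 - p.1) := by
    intro p hp
    obtain ⟨hp1, hp2, hp3⟩ := hl.1 p hp
    have hmem1 : p.1 ∈ Icc a b := ⟨hp1, by linarith⟩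
    have hmem2 : p.2 ∈ Icc a b := ⟨by linarith, hp3⟩
    have hpos : (0:ℝ) ≤ 2 * K / δ := by positivity
    by_cases hg : f p.2 - f p.1 - c ≤ 0
    · have : tm f c p = 0 := max_eq_right hg
      rw [this]
      exact mul_nonneg hpos (by linarith)
    · push_neg at hg
      have hdist : ¬ dist p.1 p.2 < δ := by
        intro hcon
        have := hδ' p.1 hmem1 p.2 hmem2 hcon
        rw [Real.dist_eq, abs_sub_comm] at this
        have : f p.2 - f p.1 < c := lt_of_abs_lt this
        linarith
      push_neg at hdist
      rw [Real.dist_eq, abs_of_nonpos (by linarith)] at hdist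
      have hlen : δ ≤ p.2 - p.1 := by linarith
      have h2K : f p.2 - f p.1 - c ≤ 2 * K := by
        have := abs_le.mp (hK' _ hmem1)
        have := abs_le.mp (hK' _ hmem2)
        linarith [hc]
      have : tm f c p = f p.2 - f p.1 - c := max_eq_left (by linarith)
      rw [this]
      calc f p.2 - f p.1 - c ≤ 2 * K := h2K
        _ = (2 * K / δ) * δ := by field_simp
        _ ≤ (2 * K / δ) * (p.2 - p.1) := by
            apply mul_le_mul_of_nonneg_left hlen hpos
  calc lsum f c l ≤ (l.map (fun p => (2 * K / δ) * (p.2 - p.1))).sum :=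
        List.sum_le_sum hterm
    _ = (2 * K / δ) * (l.map (fun p => p.2 - p.1)).sum := List.sum_map_mul_left l _ _
    _ ≤ (2 * K / δ) * max (b - a) 0 := by
        apply mul_le_mul_of_nonneg_left (len_sum_le hl) (by positivity)

end UTVAux
namespace UTVAux
open Set List

lemma bddAbove_image_Icc {f : ℝ → ℝ} (hf : Continuous f) (a b : ℝ) :
    BddAbove (f '' Icc a b) :=
  (isCompact_Icc.image_of_continuousOn hf.continuousOn).bddAbove

/-- Collapse: if the drawdown stays below `c` on `[0, b)`, any good partition sum is
dominated by a single gain. -/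
lemma collapse {f : ℝ → ℝ} (hf : Continuous f) {c b : ℝ}
    (hg : ∀ u, 0 ≤ u → u < b → sSup (f '' Icc 0 u) < f u + c) :
    ∀ {l : List (ℝ × ℝ)}, Good 0 b l →
      l = [] ∨ ∃ q ∈ l, ∃ q' ∈ l, q'.1 < q.2 ∧ lsum f c l ≤ max (f q.2 - f q'.1 - c) 0 := by
  intro l
  induction l using List.reverseRecOn with
  | nil => intro _; exact Or.inl rfl
  | append_singleton l p ih =>
    intro hl
    right
    have hgoodl : Good 0 b l :=
      ⟨fun q hq => hl.1 q (List.mem_append_left _ hq),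
        (List.pairwise_append.mp hl.2).1⟩
    have hbefore : ∀ r ∈ l, r.2 < p.1 := by
      intro r hr
      exact (List.pairwise_append.mp hl.2).2.2 r hr p (List.mem_cons_self)
    have hp := hl.1 p (List.mem_append_right _ (List.mem_cons_self))
    have hsum : lsum f c (l ++ [p]) = lsum f c l + tm f c p := by
      simp [lsum]
    rcases ih hgoodl with hnil | ⟨q, hq, q', hq', hlt, hle⟩
    · subst hnil
      refine ⟨p, by simp, p, by simp, hp.2.1, ?_⟩
      simp [lsum, tm]
    · have hqmem := hgoodl.1 q hq
      have hq'mem := hgoodl.1 q' hq'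
      by_cases hpos : f q.2 - f q'.1 - c ≤ 0
      · -- old witness contributes nothing; new pair is the witness
        refine ⟨p, List.mem_append_right _ (List.mem_cons_self),
          p, List.mem_append_right _ (List.mem_cons_self), hp.2.1, ?_⟩
        rw [hsum]
        have : lsum f c l ≤ 0 := le_trans hle (by simp [hpos])
        have h0 : (0:ℝ) ≤ lsum f c l := lsum_nonneg f c l
        have : lsum f c l = 0 := le_antisymm this h0
        rw [this, zero_add]
        exact le_refl _
      · push_neg at hpos
        -- f q.2 < f p.1 + c
        have hq2 : f q.2 ≤ sSup (f '' Icc 0 p.1) := by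
          apply le_csSup (bddAbove_image_Icc hf 0 p.1)
          exact ⟨q.2, ⟨by linarith [hqmem.1, hqmem.2.1], (hbefore q hq).le⟩, rfl⟩
        have hMp : sSup (f '' Icc 0 p.1) < f p.1 + c :=
          hg p.1 hp.1 (by linarith [hp.2.1, hp.2.2])
        have hkey : f q.2 < f p.1 + c := lt_of_le_of_lt hq2 hMp
        by_cases hpos2 : f p.2 - f p.1 - c ≤ 0
        · -- new pair contributes nothing; keep old witness
          refine ⟨q, List.mem_append_left _ hq, q', List.mem_append_left _ hq', hlt, ?_⟩
          rw [hsum]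
          have : tm f c p = 0 := max_eq_right hpos2
          rw [this, add_zero]
          exact hle
        · push_neg at hpos2
          refine ⟨p, List.mem_append_right _ (List.mem_cons_self),
            q', List.mem_append_left _ hq', by linarith [hbefore q hq, hp.2.1], ?_⟩
          have h1 : tm f c p = f p.2 - f p.1 - c := max_eq_left (by linarith)
          have h2 : max (f q.2 - f q'.1 - c) 0 = f q.2 - f q'.1 - c := max_eq_left (by linarith)
          rw [h2] at hle
          rw [hsum, h1]
          have hfinal : lsum f c l + (f p.2 - f p.1 - c) ≤ f p.2 - f q'.1 - c := by linarith
          exact le_trans hfinal (le_max_left _ _)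

lemma sSup_BSet_nonneg {f : ℝ → ℝ} (hf : Continuous f) {c b : ℝ} (hc : 0 < c) (hb : 0 < b) :
    0 ≤ sSup (BSet f c 0 b) :=
  le_trans (le_max_right (f b - f 0 - c) 0)
    (le_csSup (bddAbove_BSet hf hc 0 b) ⟨0, b, le_refl 0, hb, le_refl b, rfl⟩)

lemma collapse_le_sSup {f : ℝ → ℝ} (hf : Continuous f) {c b : ℝ} (hc : 0 < c) (hb : 0 < b)
    (hg : ∀ u, 0 ≤ u → u < b → sSup (f '' Icc 0 u) < f u + c)
    {l : List (ℝ × ℝ)} (hl : Good 0 b l) : lsum f c l ≤ sSup (BSet f c 0 b) := by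
  rcases collapse hf hg hl with rfl | ⟨q, hq, q', hq', hlt, hle⟩
  · simpa [lsum] using sSup_BSet_nonneg hf hc hb
  · refine le_trans hle (le_csSup (bddAbove_BSet hf hc 0 b) ?_)
    exact ⟨q'.1, q.2, (hl.1 q' hq').1, hlt, (hl.1 q hq).2.2, rfl⟩

end UTVAux
namespace UTVAux
open Set List

section TcFacts
variable {f : ℝ → ℝ} {c : ℝ}

lemma tcSet_bddBelow (f : ℝ → ℝ) (c : ℝ) :
    BddBelow {t | 0 ≤ t ∧ f t + c ≤ sSup (f '' Icc 0 t)} :=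
  ⟨0, fun t ht => ht.1⟩

lemma tc_nonneg (f : ℝ → ℝ) (c : ℝ) : 0 ≤ Tc f c :=
  Real.sInf_nonneg (fun t ht => ht.1)

lemma tc_hlow (u : ℝ) (hu : 0 ≤ u) (hu' : u < Tc f c) :
    sSup (f '' Icc 0 u) < f u + c := by
  by_contra hcon
  push_neg at hcon
  have : u ∈ {t | 0 ≤ t ∧ f t + c ≤ sSup (f '' Icc 0 t)} := ⟨hu, hcon⟩
  exact absurd (csInf_le (tcSet_bddBelow f c) this) (not_le.mpr hu')

lemma tc_pos (hf : Continuous f) (hc : 0 < c)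
    (hS : {t | 0 ≤ t ∧ f t + c ≤ sSup (f '' Icc 0 t)}.Nonempty) : 0 < Tc f c := by
  obtain ⟨δ, hδ, hδ'⟩ := Metric.continuousAt_iff.mp (hf.continuousAt (x := 0)) (c / 3)
    (by linarith)
  have hlb : ∀ t ∈ {t | 0 ≤ t ∧ f t + c ≤ sSup (f '' Icc 0 t)}, δ / 2 ≤ t := by
    intro t ⟨ht0, htS⟩
    by_contra hcon
    push_neg at hcon
    have hsup : sSup (f '' Icc 0 t) ≤ f 0 + c / 3 := by
      apply csSup_le (Set.Nonempty.image f (nonempty_Icc.mpr ht0))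
      rintro x ⟨v, ⟨hv0, hvt⟩, rfl⟩
      have : dist v 0 < δ := by
        rw [Real.dist_eq, sub_zero, abs_of_nonneg hv0]; linarith
      have := hδ' this
      rw [Real.dist_eq] at this
      linarith [abs_lt.mp this |>.2]
    have : dist t 0 < δ := by
      rw [Real.dist_eq, sub_zero, abs_of_nonneg ht0]; linarith
    have hft := hδ' this
    rw [Real.dist_eq] at hft
    have := abs_lt.mp hft
    linarith
  exact lt_of_lt_of_le (by linarith : (0:ℝ) < δ / 2) (le_csInf hS hlb)

lemma f_le_Msup (hf : Continuous f) {u v : ℝ} (hv : v ∈ Icc 0 u) :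
    f v ≤ sSup (f '' Icc 0 u) :=
  le_csSup (bddAbove_image_Icc hf 0 u) ⟨v, hv, rfl⟩

lemma drawdown_at_tc (hf : Continuous f) (hc : 0 < c)
    (hS : {t | 0 ≤ t ∧ f t + c ≤ sSup (f '' Icc 0 t)}.Nonempty) :
    sSup (f '' Icc 0 (Tc f c)) = f (Tc f c) + c := by
  set τ := Tc f c with hτ
  have hτ0 : 0 ≤ τ := tc_nonneg f c
  have hτpos : 0 < τ := tc_pos hf hc hS
  have hfτM : f τ ≤ sSup (f '' Icc 0 τ) := f_le_Msup hf ⟨hτ0, le_refl τ⟩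
  apply _root_.le_antisymm
  · -- M τ ≤ f τ + c
    apply le_of_forall_pos_le_add
    intro ε hε
    obtain ⟨δ, hδ, hδ'⟩ := Metric.continuousAt_iff.mp (hf.continuousAt (x := τ)) ε hε
    set η := min (δ / 2) (τ / 2) with hη
    have hηpos : 0 < η := lt_min (by linarith) (by linarith)
    set t := τ - η with htdef
    have ht0 : 0 ≤ t := by
      have : η ≤ τ / 2 := min_le_right _ _
      simp only [htdef]; linarith
    have htτ : t < τ := by simp only [htdef]; linarith
    have hMt : sSup (f '' Icc 0 t) < f t + c := tc_hlow t ht0 htτ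
    have hft : f t < f τ + ε := by
      have : dist t τ < δ := by
        rw [Real.dist_eq, htdef]
        have h1 : η ≤ δ / 2 := min_le_left _ _
        rw [abs_of_nonpos (by linarith)]
        linarith
      have := hδ' this
      rw [Real.dist_eq] at this
      linarith [abs_lt.mp this |>.2]
    have hsplit : sSup (f '' Icc 0 τ) ≤ max (sSup (f '' Icc 0 t)) (f τ + ε) := by
      apply csSup_le (Set.Nonempty.image f (nonempty_Icc.mpr hτ0))
      rintro x ⟨v, ⟨hv0, hvτ⟩, rfl⟩
      by_cases hvt : v ≤ t
      · exact le_trans (f_le_Msup hf ⟨hv0, hvt⟩) (le_max_left _ _)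
      · push_neg at hvt
        have : dist v τ < δ := by
          rw [Real.dist_eq, abs_of_nonpos (by linarith)]
          have h1 : η ≤ δ / 2 := min_le_left _ _
          simp only [htdef] at hvt
          linarith
        have := hδ' this
        rw [Real.dist_eq] at this
        exact le_trans (by linarith [abs_lt.mp this |>.2]) (le_max_right _ _)
    calc sSup (f '' Icc 0 τ) ≤ max (sSup (f '' Icc 0 t)) (f τ + ε) := hsplit
      _ ≤ max (f t + c) (f τ + ε) := max_le_max hMt.le (le_refl _)
      _ ≤ f τ + c + ε := max_le (by linarith) (by linarith)
  · -- f τ + c ≤ M τ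
    apply le_of_forall_pos_le_add
    intro ε hε
    obtain ⟨δ, hδ, hδ'⟩ := Metric.continuousAt_iff.mp (hf.continuousAt (x := τ)) (ε / 2)
      (by linarith)
    obtain ⟨u, huS, huδ⟩ := exists_lt_of_csInf_lt hS (lt_add_of_pos_right τ hδ)
    have hτu : τ ≤ u := csInf_le (tcSet_bddBelow f c) huS
    have h1 : f u + c ≤ sSup (f '' Icc 0 u) := huS.2
    have h2 : sSup (f '' Icc 0 u) ≤ max (sSup (f '' Icc 0 τ)) (f τ + ε / 2) := by
      apply csSup_le (Set.Nonempty.image f (nonempty_Icc.mpr huS.1))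
      rintro x ⟨v, ⟨hv0, hvu⟩, rfl⟩
      by_cases hvτ : v ≤ τ
      · exact le_trans (f_le_Msup hf ⟨hv0, hvτ⟩) (le_max_left _ _)
      · push_neg at hvτ
        have : dist v τ < δ := by
          rw [Real.dist_eq, abs_of_nonneg (by linarith)]
          linarith
        have := hδ' this
        rw [Real.dist_eq] at this
        exact le_trans (by linarith [abs_lt.mp this |>.2]) (le_max_right _ _)
    have h3 : max (sSup (f '' Icc 0 τ)) (f τ + ε / 2) ≤ sSup (f '' Icc 0 τ) + ε / 2 :=
      max_le (by linarith) (by linarith)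
    have h4 : f τ - ε / 2 < f u := by
      have : dist u τ < δ := by
        rw [Real.dist_eq, abs_of_nonneg (by linarith)]
        linarith
      have := hδ' this
      rw [Real.dist_eq] at this
      linarith [abs_lt.mp this |>.1]
    linarith

lemma exists_theta (hf : Continuous f) (hτ0 : 0 ≤ Tc f c) :
    ∃ θ ∈ Icc 0 (Tc f c), f θ = sSup (f '' Icc 0 (Tc f c)) := by
  obtain ⟨θ, hθmem, hθmax⟩ := isCompact_Icc.exists_isMaxOn (nonempty_Icc.mpr hτ0)
    hf.continuousOn
  refine ⟨θ, hθmem, le_antisymm (f_le_Msup hf hθmem) ?_⟩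
  apply csSup_le (Set.Nonempty.image f (nonempty_Icc.mpr hτ0))
  rintro x ⟨v, hv, rfl⟩
  exact hθmax hv

end TcFacts
end UTVAux
namespace UTVAux
open Set List

lemma max_add_le (x y : ℝ) : max (x + y) 0 ≤ max x 0 + max y 0 :=
  max_le (add_le_add (le_max_left _ _) (le_max_left _ _))
    (add_nonneg (le_max_right _ _) (le_max_right _ _))

lemma sum_map_add (l : List (ℝ × ℝ)) (u v : ℝ × ℝ → ℝ) :
    (l.map (fun p => u p + v p)).sum = (l.map u).sum + (l.map v).sum := by
  induction l with
  | nil => simp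
  | cons p l ih => simp [ih]; ring

lemma filterMap_lsum (f : ℝ → ℝ) (c : ℝ) (g : ℝ × ℝ → Option (ℝ × ℝ)) (u : ℝ × ℝ → ℝ)
    (l : List (ℝ × ℝ))
    (h : ∀ p ∈ l, (g p = none → u p = 0) ∧ ∀ q, g p = some q → u p = tm f c q) :
    (l.map u).sum = lsum f c (l.filterMap g) := by
  induction l with
  | nil => simp [lsum]
  | cons p l ih =>
    have hp := h p (List.mem_cons_self)
    have ih' := ih (fun q hq => h q (List.mem_cons_of_mem _ hq))
    cases hg : g p with
    | none =>
      simp only [List.map_cons, List.sum_cons, List.filterMap_cons, hg, hp.1 hg, zero_add]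
      exact ih'
    | some q =>
      simp only [List.map_cons, List.sum_cons, List.filterMap_cons, hg, hp.2 q hg, lsum]
      simp only [lsum] at ih'
      rw [ih']

lemma lsum_cons (f : ℝ → ℝ) (c : ℝ) (p : ℝ × ℝ) (l : List (ℝ × ℝ)) :
    lsum f c (p :: l) = tm f c p + lsum f c l := by
  simp [lsum]

lemma good_cons {a b : ℝ} {p : ℝ × ℝ} {l : List (ℝ × ℝ)} (hl : Good a b l)
    (hp1 : a ≤ p.1) (hp2 : p.1 < p.2) (hp3 : p.2 ≤ b) (hsep : ∀ q ∈ l, p.2 < q.1) :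
    Good a b (p :: l) := by
  constructor
  · intro q hq
    rcases List.mem_cons.mp hq with rfl | hq'
    · exact ⟨hp1, hp2, hp3⟩
    · exact hl.1 q hq'
  · exact List.pairwise_cons.mpr ⟨hsep, hl.2⟩

lemma good_singleton {a b t s : ℝ} (h1 : a ≤ t) (h2 : t < s) (h3 : s ≤ b) :
    Good a b ((t, s) :: ([] : List (ℝ × ℝ))) :=
  ⟨by rintro p hp; simp at hp; subst hp; exact ⟨h1, h2, h3⟩, by simp⟩

lemma lsum_singleton (f : ℝ → ℝ) (c : ℝ) (t s : ℝ) :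
    lsum f c ((t, s) :: ([] : List (ℝ × ℝ))) = max (f s - f t - c) 0 := by simp [lsum, tm]

lemma LSet_eq_zero {f : ℝ → ℝ} {c a b : ℝ} (hab : b ≤ a) : LSet f c a b = {0} := by
  ext x
  constructor
  · rintro ⟨l, ⟨h1, _⟩, rfl⟩
    match l with
    | [] => simp [lsum]
    | p :: l' =>
      have := h1 p (List.mem_cons_self)
      have : a ≤ p.1 ∧ p.1 < p.2 ∧ p.2 ≤ b := this
      exact absurd (lt_of_lt_of_le this.2.1 (le_trans this.2.2 hab)) (not_lt.mpr this.1)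
  · rintro rfl
    exact zero_mem_LSet f c a b

end UTVAux
namespace UTVAux
open Set List

lemma key {f : ℝ → ℝ} (hf : Continuous f) {c T : ℝ} (hc : 0 < c) (hT : 0 < T) :
    UTV f c 0 T = maxGainLT f c 0 (min (Tc f c) T) + UTV f c (Tc f c) T := by
  by_cases hS : {t | 0 ≤ t ∧ f t + c ≤ sSup (f '' Icc 0 t)}.Nonempty
  swap
  · -- the drawdown never reaches c : Tc = sInf ∅ = 0 and the claim is trivial
    have hτ : Tc f c = 0 := by
      rw [Set.not_nonempty_iff_eq_empty] at hS
      rw [Tc, hS, Real.sInf_empty]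
    rw [hτ, min_eq_left hT.le]
    have hB0 : maxGainLT f c 0 0 = 0 := by
      rw [maxGainLT_eq]
      convert Real.sSup_empty
      ext x
      simp only [BSet, mem_setOf_eq, mem_empty_iff_false, iff_false]
      rintro ⟨t, s, ht, hts, hs0, _⟩
      linarith
    rw [hB0, zero_add]
  · set τ := Tc f c with hτdef
    have hτ0 : 0 ≤ τ := tc_nonneg f c
    have hτpos : 0 < τ := tc_pos hf hc hS
    rcases le_or_gt T τ with hτT | hτT
    · -- Case 1 : T ≤ τ
      rw [min_eq_right hτT]
      have h2 : UTV f c τ T = 0 := by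
        rw [UTV_eq, LSet_eq_zero hτT, csSup_singleton]
      rw [h2, add_zero, UTV_eq, maxGainLT_eq]
      apply _root_.le_antisymm
      · apply Real.sSup_le
        · rintro x ⟨l, hl, rfl⟩
          exact collapse_le_sSup hf hc hT
            (fun u hu hub => tc_hlow u hu (lt_of_lt_of_le hub hτT)) hl
        · exact sSup_BSet_nonneg hf hc hT
      · refine csSup_le ⟨max (f T - f 0 - c) 0, 0, T, le_refl 0, hT, le_refl T, rfl⟩ ?_
        rintro x ⟨t, s, ht, hts, hsT, rfl⟩
        apply le_csSup (bddAbove_LSet hf hc 0 T)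
        exact ⟨_, good_singleton ht hts hsT, (lsum_singleton f c t s).symm⟩
    · -- Case 2 : τ < T
      rw [min_eq_left hτT.le]
      obtain ⟨θ, hθmem, hθeq⟩ := exists_theta hf hτ0
      have hMτ : sSup (f '' Icc 0 τ) = f τ + c := drawdown_at_tc hf hc hS
      have hθτ : θ < τ := by
        rcases lt_or_eq_of_le hθmem.2 with h | h
        · exact h
        · exfalso
          rw [h, hMτ] at hθeq
          linarith
      have hfθ : f θ = f τ + c := by rw [hθeq, hMτ]
      rw [UTV_eq, UTV_eq, maxGainLT_eq]
      have hAbdd := bddAbove_LSet hf hc 0 T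
      have hCbdd := bddAbove_LSet hf hc τ T
      have hBbdd := bddAbove_BSet hf hc 0 τ
      have hBne : (BSet f c 0 τ).Nonempty := ⟨_, 0, τ, le_refl 0, hτpos, le_refl τ, rfl⟩
      have hCne : (LSet f c τ T).Nonempty := ⟨0, zero_mem_LSet f c τ T⟩
      apply _root_.le_antisymm
      · -- upper bound : split each partition at τ
        apply Real.sSup_le
        swap
        · exact add_nonneg (sSup_BSet_nonneg hf hc hτpos)
            (le_csSup hCbdd (zero_mem_LSet f c τ T))
        rintro x ⟨l, hl, rfl⟩
        classical
        set g1 : ℝ × ℝ → Option (ℝ × ℝ) := fun p =>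
          if p.2 ≤ τ then some p else if p.1 < θ then some (p.1, θ) else none with hg1
        set g2 : ℝ × ℝ → Option (ℝ × ℝ) := fun p =>
          if τ ≤ p.1 then some p else if τ < p.2 then some (τ, p.2) else none with hg2
        set u1 : ℝ × ℝ → ℝ := fun p => ((g1 p).map (tm f c)).getD 0 with hu1
        set u2 : ℝ × ℝ → ℝ := fun p => ((g2 p).map (tm f c)).getD 0 with hu2
        have hpt : ∀ p ∈ l, tm f c p ≤ u1 p + u2 p := by
          intro p hp
          obtain ⟨hp1, hp2, hp3⟩ := hl.1 p hp
          by_cases h2 : p.2 ≤ τ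
          · have e1 : u1 p = tm f c p := by simp [hu1, hg1, h2]
            have e2 : u2 p = 0 := by
              have hn1 : ¬ τ ≤ p.1 := by push_neg; linarith
              have hn2 : ¬ τ < p.2 := not_lt.mpr h2
              simp [hu2, hg2, hn1, hn2]
            rw [e1, e2, add_zero]
          · push_neg at h2
            by_cases h1 : τ ≤ p.1
            · have e1 : u1 p = 0 := by
                have hn1 : ¬ p.2 ≤ τ := not_le.mpr h2
                have hn2 : ¬ p.1 < θ := not_lt.mpr (le_trans hθmem.2 h1)
                simp [hu1, hg1, hn1, hn2]
              have e2 : u2 p = tm f c p := by simp [hu2, hg2, h1]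
              rw [e1, e2, zero_add]
            · push_neg at h1
              have e2 : u2 p = tm f c (τ, p.2) := by
                simp [hu2, hg2, not_le.mpr h1, h2]
              by_cases hθp : p.1 < θ
              · have e1 : u1 p = tm f c (p.1, θ) := by
                  simp [hu1, hg1, not_le.mpr h2, hθp]
                rw [e1, e2]
                show max (f p.2 - f p.1 - c) 0 ≤ max (f θ - f p.1 - c) 0 + max (f p.2 - f τ - c) 0
                have hid : f p.2 - f p.1 - c = (f θ - f p.1 - c) + (f p.2 - f τ - c) := by
                  rw [hfθ]; ring
                rw [hid]
                exact max_add_le _ _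
              · push_neg at hθp
                have e1 : u1 p = 0 := by
                  simp [hu1, hg1, not_le.mpr h2, not_lt.mpr hθp]
                rw [e1, e2, zero_add]
                show max (f p.2 - f p.1 - c) 0 ≤ max (f p.2 - f τ - c) 0
                apply max_le_max _ (le_refl 0)
                have ha : f θ ≤ sSup (f '' Icc 0 p.1) := f_le_Msup hf ⟨hθmem.1, hθp⟩
                have hb : sSup (f '' Icc 0 p.1) < f p.1 + c := tc_hlow p.1 hp1 h1
                have ha' : f τ + c ≤ sSup (f '' Icc 0 p.1) := by rw [← hfθ]; exact ha
                linarith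
        have hsum1 : (l.map u1).sum = lsum f c (l.filterMap g1) := by
          apply filterMap_lsum
          intro p hp
          constructor
          · intro h; simp [hu1, h]
          · intro q h; simp [hu1, h]
        have hsum2 : (l.map u2).sum = lsum f c (l.filterMap g2) := by
          apply filterMap_lsum
          intro p hp
          constructor
          · intro h; simp [hu2, h]
          · intro q h; simp [hu2, h]
        have hgood1 : Good 0 τ (l.filterMap g1) := by
          constructor
          · intro q hq
            rw [List.mem_filterMap] at hq
            obtain ⟨p, hp, hgp⟩ := hq
            obtain ⟨hp1, hp2, hp3⟩ := hl.1 p hp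
            by_cases h2 : p.2 ≤ τ
            · simp only [hg1, h2, if_true] at hgp
              rw [Option.some_inj] at hgp
              subst hgp
              exact ⟨hp1, hp2, h2⟩
            · by_cases hθp : p.1 < θ
              · simp only [hg1, h2, if_false, hθp, if_true] at hgp
                rw [Option.some_inj] at hgp
                subst hgp
                exact ⟨hp1, hθp, hθmem.2⟩
              · simp [hg1, h2, hθp] at hgp
          · rw [List.pairwise_filterMap]
            refine hl.2.imp ?_
            intro p p' hpp' q hq q' hq'
            have hq'1 : q'.1 = p'.1 := by
              simp only [hg1] at hq'
              split_ifs at hq' with ha hb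
              · rw [Option.some_inj] at hq'; rw [← hq']
              · rw [Option.some_inj] at hq'; rw [← hq']
            rw [hq'1]
            simp only [hg1] at hq
            split_ifs at hq with ha hb
            · rw [Option.some_inj] at hq; rw [← hq]; exact hpp'
            · rw [Option.some_inj] at hq; rw [← hq]
              push_neg at ha
              calc θ < τ := hθτ
                _ < p.2 := ha
                _ < p'.1 := hpp'
        have hgood2 : Good τ T (l.filterMap g2) := by
          constructor
          · intro q hq
            rw [List.mem_filterMap] at hq
            obtain ⟨p, hp, hgp⟩ := hq
            obtain ⟨hp1, hp2, hp3⟩ := hl.1 p hp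
            by_cases h1 : τ ≤ p.1
            · simp only [hg2, h1, if_true] at hgp
              rw [Option.some_inj] at hgp
              subst hgp
              exact ⟨h1, hp2, hp3⟩
            · by_cases h2 : τ < p.2
              · simp only [hg2, h1, if_false, h2, if_true] at hgp
                rw [Option.some_inj] at hgp
                subst hgp
                exact ⟨le_refl τ, h2, hp3⟩
              · simp [hg2, h1, h2] at hgp
          · rw [List.pairwise_filterMap]
            refine hl.2.imp ?_
            intro p p' hpp' q hq q' hq'
            have hq2 : q.2 = p.2 := by
              simp only [hg2] at hq
              split_ifs at hq with ha hb
              · rw [Option.some_inj] at hq; rw [← hq]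
              · rw [Option.some_inj] at hq; rw [← hq]
            rw [hq2]
            simp only [hg2] at hq'
            split_ifs at hq' with ha hb
            · rw [Option.some_inj] at hq'; rw [← hq']; exact hpp'
            · rw [Option.some_inj] at hq'; rw [← hq']
              push_neg at ha
              exact lt_trans hpp' ha
        calc lsum f c l ≤ (l.map (fun p => u1 p + u2 p)).sum := List.sum_le_sum hpt
          _ = (l.map u1).sum + (l.map u2).sum := sum_map_add l u1 u2
          _ ≤ sSup (BSet f c 0 τ) + sSup (LSet f c τ T) := by
              apply add_le_add
              · rw [hsum1]
                exact collapse_le_sSup hf hc hτpos (fun u hu hub => tc_hlow u hu hub) hgood1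
              · rw [hsum2]
                exact le_csSup hCbdd ⟨_, hgood2, rfl⟩
      · -- lower bound : concatenate a single pair before τ with a partition after τ
        have hmain : ∀ x ∈ BSet f c 0 τ, ∀ y ∈ LSet f c τ T, x + y ≤ sSup (LSet f c 0 T) := by
          rintro x ⟨t, s, ht, hts, hsτ, rfl⟩ y ⟨l, hl, rfl⟩
          by_cases hl0 : l = List.nil
          · subst hl0
            rw [show lsum f c List.nil = 0 by simp [lsum], add_zero]
            apply le_csSup hAbdd
            exact ⟨_, good_singleton ht hts (by linarith), (lsum_singleton f c t s).symm⟩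
          · have hstarts : ∀ q ∈ l, τ ≤ q.1 := fun q hq => (hl.1 q hq).1
            by_cases hs : s < τ
            · have hgood : Good 0 T ((t, s) :: l) :=
                good_cons (good_mono hl hτ0 (le_refl T)) ht hts (by linarith)
                  (fun q hq => lt_of_lt_of_le hs (hstarts q hq))
              apply le_csSup hAbdd
              refine ⟨_, hgood, ?_⟩
              rw [lsum_cons]
              rfl
            · have hsτ' : s = τ := _root_.le_antisymm hsτ (not_lt.mp hs)
              by_cases htθ : t < θ
              · have hgood : Good 0 T ((t, θ) :: l) :=
                  good_cons (good_mono hl hτ0 (le_refl T)) ht htθ (by linarith)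
                    (fun q hq => lt_of_lt_of_le hθτ (hstarts q hq))
                have hle : max (f s - f t - c) 0 + lsum f c l ≤ lsum f c ((t, θ) :: l) := by
                  rw [lsum_cons]
                  have hmax : max (f s - f t - c) 0 ≤ tm f c (t, θ) := by
                    show max (f s - f t - c) 0 ≤ max (f θ - f t - c) 0
                    apply max_le_max _ (le_refl 0)
                    rw [hsτ', hfθ]
                    linarith
                  linarith
                exact le_trans hle (le_csSup hAbdd ⟨_, hgood, rfl⟩)
              · push_neg at htθ
                have hx0 : max (f s - f t - c) 0 = 0 := by
                  apply max_eq_right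
                  have h1 : f θ ≤ sSup (f '' Icc 0 t) := f_le_Msup hf ⟨hθmem.1, htθ⟩
                  have h1' : f τ + c ≤ sSup (f '' Icc 0 t) := by rw [← hfθ]; exact h1
                  have h2 : sSup (f '' Icc 0 t) < f t + c :=
                    tc_hlow t ht (show t < Tc f c by rw [← hτdef, ← hsτ']; exact hts)
                  rw [hsτ']
                  linarith
                rw [hx0, zero_add]
                apply le_csSup hAbdd
                exact ⟨l, good_mono hl hτ0 (le_refl T), rfl⟩
        have h1 : ∀ x ∈ BSet f c 0 τ, x ≤ sSup (LSet f c 0 T) - sSup (LSet f c τ T) := by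
          intro x hx
          have : sSup (LSet f c τ T) ≤ sSup (LSet f c 0 T) - x := by
            apply csSup_le hCne
            intro y hy
            linarith [hmain x hx y hy]
          linarith
        linarith [csSup_le hBne h1]

end UTVAux

/-- Decomposition at the first drawdown time: for every `μ`, `c > 0`, `T > 0`,
almost surely `UTV_μ^c[0,T] = sup_{0 ≤ t < s ≤ T_c ∧ T} (W_s - W_t - c)₊ + UTV_μ^c[T_c, T]`. -/
theorem UTV_decomposition_first_drawdown {Ω : Type*} [MeasurableSpace Ω] (P : Measure Ω)
    [IsProbabilityMeasure P] (B : ℝ → Ω → ℝ) (hB : IsStdBrownianMotion P B)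
    (μ c T : ℝ) (hc : 0 < c) (hT : 0 < T) :
    ∀ᵐ ω ∂P,
      UTV (fun t => B t ω + μ * t) c 0 T
        = maxGainLT (fun t => B t ω + μ * t) c 0 (min (Tc (fun t => B t ω + μ * t) c) T)
          + UTV (fun t => B t ω + μ * t) c (Tc (fun t => B t ω + μ * t) c) T := by
  filter_upwards [hB.cont] with ω hω
  exact UTVAux.key (hω.add (continuous_const.mul continuous_id)) hc hT
end

section
/- Iterated decomposition of upward truncated variation: for every μ ∈ ℝ, c > 0 and T > 0, almost surely UTV_μ^c[0,T] = Σ_{i ≥ 1 : T_c^{(i−1)} ≤ T} sup_{T_c^{(i−1)} ≤ t < s ≤ T_c^{(i)} ∧ T} (W_s − W_t − c)_+. -/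
open MeasureTheory ProbabilityTheory Real Set

namespace UTVaux

open Filter Topology

variable {f : ℝ → ℝ} {c : ℝ}

/-! ### Running maximum -/

lemma bddAbove_img (hf : Continuous f) (a t : ℝ) : BddAbove (f '' Set.Icc a t) :=
  (isCompact_Icc.image_of_continuousOn hf.continuousOn).bddAbove

lemma le_rmax (hf : Continuous f) {a x t : ℝ} (h1 : a ≤ x) (h2 : x ≤ t) :
    f x ≤ sSup (f '' Set.Icc a t) :=
  le_csSup (bddAbove_img hf a t) ⟨x, ⟨h1, h2⟩, rfl⟩

lemma rmax_le {a t y : ℝ} (h : a ≤ t) (hy : ∀ x ∈ Set.Icc a t, f x ≤ y) :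
    sSup (f '' Set.Icc a t) ≤ y :=
  csSup_le ((Set.nonempty_Icc.2 h).image f) (by rintro z ⟨x, hx, rfl⟩; exact hy x hx)

lemma rmax_self (a : ℝ) : sSup (f '' Set.Icc a a) = f a := by
  rw [Set.Icc_self, Set.image_singleton, csSup_singleton]

lemma rmax_split (hf : Continuous f) {a m t : ℝ} (h1 : a ≤ m) (h2 : m ≤ t) :
    sSup (f '' Set.Icc a t) ≤ max (sSup (f '' Set.Icc a m)) (sSup (f '' Set.Icc m t)) := by
  refine rmax_le (h1.trans h2) fun x hx => ?_
  rcases le_total x m with h | h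
  · exact le_max_of_le_left (le_rmax hf hx.1 h)
  · exact le_max_of_le_right (le_rmax hf h hx.2)

lemma exists_rmax (hf : Continuous f) {a t : ℝ} (h : a ≤ t) :
    ∃ x ∈ Set.Icc a t, f x = sSup (f '' Set.Icc a t) := by
  obtain ⟨x, hx, hmax⟩ := isCompact_Icc.exists_isMaxOn (Set.nonempty_Icc.2 h)
    hf.continuousOn
  exact ⟨x, hx, le_antisymm (le_rmax hf hx.1 hx.2) (rmax_le h fun y hy => hmax hy)⟩

/-! ### The drawdown hitting set -/

def Sset (f : ℝ → ℝ) (c a : ℝ) : Set ℝ :=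
  {t | a < t ∧ f t + c ≤ sSup (f '' Set.Icc a t)}

lemma sInf_Sset_mem (hf : Continuous f) (hc : 0 < c) {a : ℝ}
    (hne : (Sset f c a).Nonempty) :
    a < sInf (Sset f c a) ∧ sInf (Sset f c a) ∈ Sset f c a := by
  have hbd : BddBelow (Sset f c a) := ⟨a, fun t ht => ht.1.le⟩
  obtain ⟨δ, hδ0, hδ'⟩ := Metric.continuousAt_iff.mp (hf.continuousAt (x := a))
    (c / 3) (by linarith)
  have hsep : ∀ t ∈ Sset f c a, a + δ / 2 ≤ t := by
    intro t ht
    by_contra hlt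
    push_neg at hlt
    have hat : a < t := ht.1
    have h1 : sSup (f '' Set.Icc a t) ≤ f a + c / 3 := by
      refine rmax_le hat.le fun x hx => ?_
      have hd : dist x a < δ := by
        rw [Real.dist_eq, abs_of_nonneg (by linarith [hx.1])]
        linarith [hx.2]
      have h := hδ' hd
      rw [Real.dist_eq, abs_lt] at h
      linarith [h.2]
    have h2 : f a - c / 3 < f t + c / 3 := by
      have hd : dist t a < δ := by
        rw [Real.dist_eq, abs_of_nonneg (by linarith)]
        linarith
      have h := hδ' hd
      rw [Real.dist_eq, abs_lt] at h
      linarith [h.1]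
    linarith [ht.2]
  have hlb : a + δ / 2 ≤ sInf (Sset f c a) := le_csInf hne hsep
  have hlt : a < sInf (Sset f c a) := by linarith
  set τ := sInf (Sset f c a) with hτdef
  have haτ : a ≤ τ := hlt.le
  have key : ∀ ε : ℝ, 0 < ε → ε < c / 2 → f τ + c ≤ sSup (f '' Set.Icc a τ) + 2 * ε := by
    intro ε hε hεc
    obtain ⟨δ', hδ'0, hδ''⟩ := Metric.continuousAt_iff.mp (hf.continuousAt (x := τ)) ε hε
    obtain ⟨t, htS, htδ⟩ := (csInf_lt_iff hbd hne).mp (show τ < τ + δ' by linarith)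
    have hτt : τ ≤ t := csInf_le hbd htS
    have h3 : sSup (f '' Set.Icc τ t) ≤ f τ + ε := by
      refine rmax_le hτt fun x hx => ?_
      have hd : dist x τ < δ' := by
        rw [Real.dist_eq, abs_of_nonneg (by linarith [hx.1])]
        linarith [hx.2]
      have h := hδ'' hd; rw [Real.dist_eq, abs_lt] at h; linarith [h.2]
    have h4 : f τ - ε ≤ f t := by
      have hd : dist t τ < δ' := by
        rw [Real.dist_eq, abs_of_nonneg (by linarith)]; linarith
      have h := hδ'' hd; rw [Real.dist_eq, abs_lt] at h; linarith [h.1]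
    have h5 : f t + c ≤ max (sSup (f '' Set.Icc a τ)) (sSup (f '' Set.Icc τ t)) :=
      htS.2.trans (rmax_split hf haτ hτt)
    rcases le_max_iff.mp h5 with h | h
    · linarith
    · linarith
  have hmem : f τ + c ≤ sSup (f '' Set.Icc a τ) := by
    by_contra hcon
    push_neg at hcon
    have hd0 : 0 < f τ + c - sSup (f '' Set.Icc a τ) := by linarith
    have hk := key (min ((f τ + c - sSup (f '' Set.Icc a τ)) / 4) (c / 4))
      (by positivity) ((min_le_right _ _).trans_lt (by linarith))
    have h6 : min ((f τ + c - sSup (f '' Set.Icc a τ)) / 4) (c / 4)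
        ≤ (f τ + c - sSup (f '' Set.Icc a τ)) / 4 := min_le_left _ _
    linarith
  exact ⟨hlt, hlt, hmem⟩

end UTVaux
namespace UTVaux

open Filter Topology

variable {f : ℝ → ℝ} {c : ℝ}

section TcIterProps

variable (hf : Continuous f) (hc : 0 < c)
  (hrec : ∀ u : ℝ, 0 ≤ u → ∃ t, u < t ∧ f t + c ≤ sSup (f '' Set.Icc u t))

lemma tcIter_succ_def (n : ℕ) : TcIter f c (n + 1) = sInf (Sset f c (TcIter f c n)) := rfl

include hf hc hrec in
lemma tcIter_basic (n : ℕ) :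
    0 ≤ TcIter f c n ∧ TcIter f c n < TcIter f c (n + 1) ∧
      TcIter f c (n + 1) ∈ Sset f c (TcIter f c n) := by
  induction n with
  | zero =>
    have h0 : (TcIter f c 0 : ℝ) = 0 := rfl
    have hne : (Sset f c (TcIter f c 0)).Nonempty := by
      rw [h0]; exact hrec 0 le_rfl
    obtain ⟨h1, h2⟩ := sInf_Sset_mem hf hc hne
    exact ⟨le_of_eq h0.symm, h1, h2⟩
  | succ n ih =>
    have hnn : 0 ≤ TcIter f c (n + 1) := (ih.1.trans ih.2.1.le)
    have hne : (Sset f c (TcIter f c (n + 1))).Nonempty := hrec _ hnn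
    obtain ⟨h1, h2⟩ := sInf_Sset_mem hf hc hne
    exact ⟨hnn, h1, h2⟩

include hf hc hrec in
lemma tcIter_nonneg (n : ℕ) : 0 ≤ TcIter f c n := (tcIter_basic hf hc hrec n).1

include hf hc hrec in
lemma tcIter_strictMono : StrictMono (TcIter f c) :=
  strictMono_nat_of_lt_succ fun n => (tcIter_basic hf hc hrec n).2.1

include hf hc hrec in
lemma tcIter_drawdown (n : ℕ) :
    f (TcIter f c (n + 1)) + c ≤ sSup (f '' Set.Icc (TcIter f c n) (TcIter f c (n + 1))) :=
  (tcIter_basic hf hc hrec n).2.2.2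

include hf hc hrec in
lemma tcIter_no_drawdown (n : ℕ) {t : ℝ} (h1 : TcIter f c n ≤ t)
    (h2 : t < TcIter f c (n + 1)) :
    sSup (f '' Set.Icc (TcIter f c n) t) < f t + c := by
  rcases eq_or_lt_of_le h1 with h | h
  · rw [← h, rmax_self]; linarith
  · by_contra hcon
    push_neg at hcon
    have ht : t ∈ Sset f c (TcIter f c n) := ⟨h, hcon⟩
    have : TcIter f c (n + 1) ≤ t :=
      csInf_le ⟨TcIter f c n, fun s hs => hs.1.le⟩ ht
    linarith

include hf hc hrec in
lemma tcIter_epoch_lt (n : ℕ) {u v : ℝ} (hu : TcIter f c n ≤ u) (huv : u ≤ v)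
    (hv : v < TcIter f c (n + 1)) : f u < f v + c :=
  lt_of_le_of_lt (le_rmax hf hu huv) (tcIter_no_drawdown hf hc hrec n (hu.trans huv) hv)

include hf hc hrec in
lemma tcIter_tendsto : Tendsto (TcIter f c) atTop atTop := by
  by_cases hbdd : BddAbove (Set.range (TcIter f c))
  · exfalso
    have hmono : Monotone (TcIter f c) := (tcIter_strictMono hf hc hrec).monotone
    have hlim : Tendsto (TcIter f c) atTop (𝓝 (⨆ n, TcIter f c n)) :=
      tendsto_atTop_ciSup hmono hbdd
    set L := ⨆ n, TcIter f c n with hL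
    have hx : ∀ n : ℕ, ∃ x, x ∈ Set.Icc (TcIter f c n) (TcIter f c (n + 1)) ∧
        f x = sSup (f '' Set.Icc (TcIter f c n) (TcIter f c (n + 1))) := by
      intro n
      obtain ⟨x, hx1, hx2⟩ := exists_rmax hf (tcIter_basic hf hc hrec n).2.1.le
      exact ⟨x, hx1, hx2⟩
    choose x hx1 hx2 using hx
    have hsucc : Tendsto (fun n => TcIter f c (n + 1)) atTop (𝓝 L) :=
      hlim.comp (tendsto_add_atTop_nat 1)
    have hxlim : Tendsto x atTop (𝓝 L) :=
      tendsto_of_tendsto_of_tendsto_of_le_of_le hlim hsucc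
        (fun n => (hx1 n).1) (fun n => (hx1 n).2)
    have hfx : Tendsto (fun n => f (x n) - f (TcIter f c (n + 1))) atTop (𝓝 (f L - f L)) :=
      ((hf.continuousAt.tendsto.comp hxlim).sub
        (hf.continuousAt.tendsto.comp hsucc))
    have hge : ∀ n, c ≤ f (x n) - f (TcIter f c (n + 1)) := by
      intro n
      have := tcIter_drawdown hf hc hrec n
      rw [← hx2 n] at this
      linarith
    have : c ≤ f L - f L := ge_of_tendsto' hfx hge
    simp at this
    linarith
  · exact tendsto_atTop_atTop_of_monotone' (tcIter_strictMono hf hc hrec).monotone hbdd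

end TcIterProps

end UTVaux
namespace UTVaux

open Filter Topology

variable {f : ℝ → ℝ} {c : ℝ}

/-! ### maxGainLT basics -/

lemma maxGain_bddAbove (hf : Continuous f) (c a b : ℝ) :
    BddAbove {x | ∃ t s : ℝ, a ≤ t ∧ t < s ∧ s ≤ b ∧ x = max (f s - f t - c) 0} := by
  rcases le_or_gt a b with hab | hab
  · refine ⟨max (sSup (f '' Set.Icc a b) - sInf (f '' Set.Icc a b) - c) 0, ?_⟩
    rintro x ⟨t, s, h1, h2, h3, rfl⟩
    have hbb : BddBelow (f '' Set.Icc a b) :=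
      (isCompact_Icc.image_of_continuousOn hf.continuousOn).bddBelow
    have hfs : f s ≤ sSup (f '' Set.Icc a b) := le_rmax hf (h1.trans h2.le) h3
    have hft : sInf (f '' Set.Icc a b) ≤ f t :=
      csInf_le hbb ⟨t, ⟨h1, h2.le.trans h3⟩, rfl⟩
    exact max_le_max (by linarith) le_rfl
  · refine ⟨0, ?_⟩
    rintro x ⟨t, s, h1, h2, h3, rfl⟩
    linarith
lemma maxGainLT_nonneg (c a b : ℝ) : 0 ≤ maxGainLT f c a b :=
  Real.sSup_nonneg (by rintro x ⟨t, s, _, _, _, rfl⟩; exact le_max_right _ _)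

lemma le_maxGainLT (hf : Continuous f) {a b t s : ℝ} (ht : a ≤ t) (hts : t < s)
    (hsb : s ≤ b) : max (f s - f t - c) 0 ≤ maxGainLT f c a b :=
  le_csSup (maxGain_bddAbove hf c a b) ⟨t, s, ht, hts, hsb, rfl⟩

lemma maxGainLT_of_ge {a b : ℝ} (h : b ≤ a) : maxGainLT f c a b = 0 := by
  have : {x | ∃ t s : ℝ, a ≤ t ∧ t < s ∧ s ≤ b ∧ x = max (f s - f t - c) 0} = ∅ := by
    ext x
    simp only [Set.mem_setOf_eq, Set.mem_empty_iff_false, iff_false, not_exists]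
    rintro t s ⟨h1, h2, h3, -⟩
    linarith
  rw [maxGainLT, this, Real.sSup_empty]

/-! ### Good lists of increase intervals -/

inductive GoodList (b : ℝ) : ℝ → List (ℝ × ℝ) → Prop
  | nil (a : ℝ) : GoodList b a List.nil
  | cons {a t s : ℝ} {l : List (ℝ × ℝ)} (hat : a ≤ t) (hts : t < s) (hsb : s ≤ b)
      (hl : GoodList b s l) : GoodList b a ((t, s) :: l)

def sumGains (f : ℝ → ℝ) (c : ℝ) (l : List (ℝ × ℝ)) : ℝ :=
  (l.map fun p => max (f p.2 - f p.1 - c) 0).sum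

@[simp] lemma sumGains_nil : sumGains f c List.nil = 0 := rfl

lemma sumGains_cons (t s : ℝ) (l : List (ℝ × ℝ)) :
    sumGains f c ((t, s) :: l) = max (f s - f t - c) 0 + sumGains f c l := by
  simp [sumGains]

lemma sumGains_nonneg (l : List (ℝ × ℝ)) : 0 ≤ sumGains f c l := by
  refine List.sum_nonneg ?_
  intro x hx
  simp only [List.mem_map] at hx
  obtain ⟨p, -, rfl⟩ := hx
  exact le_max_right _ _

lemma goodList_eq_nil_of_gt {b a : ℝ} {l : List (ℝ × ℝ)} (h : GoodList b a l)
    (hab : b < a) : l = List.nil := by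
  cases h with
  | nil => rfl
  | cons hat hts hsb hl => exact absurd ((hat.trans_lt hts).trans_le hsb) (not_lt.2 hab.le)

/-! ### Within-epoch bound -/

lemma epoch_pair (hc : 0 < c) {A b : ℝ} (hdd : ∀ u v : ℝ, A ≤ u → u ≤ v → v < b → f u < f v + c) :
    ∀ {l : List (ℝ × ℝ)} {a : ℝ}, GoodList b a l → A ≤ a → a ≤ b →
      ∃ t s : ℝ, a ≤ t ∧ t ≤ s ∧ s ≤ b ∧ sumGains f c l ≤ max (f s - f t - c) 0 := by
  intro l
  induction l with
  | nil =>
    intro a _ hAa hab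
    exact ⟨a, a, le_rfl, le_rfl, hab, by simp⟩
  | cons p l ih =>
    rintro a hgood hAa hab
    obtain ⟨t, s⟩ := p
    cases hgood with
    | cons hat hts hsb hl =>
      obtain ⟨t', s', h1, h2, h3, h4⟩ := ih hl (hAa.trans (hat.trans hts.le)) hsb
      rw [sumGains_cons]
      rcases le_or_gt (f s' - f t' - c) 0 with hneg | hpos
      · refine ⟨t, s, hat, hts.le, hsb, ?_⟩
        have : sumGains f c l ≤ 0 := h4.trans (by simp [hneg])
        have h0 : (0:ℝ) ≤ max (f s - f t - c) 0 := le_max_right _ _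
        linarith
      · rcases le_or_gt (f s - f t - c) 0 with hneg2 | hpos2
        · refine ⟨t', s', (hat.trans (hts.le.trans h1)), h2, h3, ?_⟩
          have : max (f s - f t - c) 0 = 0 := max_eq_right hneg2
          linarith
        · refine ⟨t, s', hat, hts.le.trans (h1.trans h2), h3, ?_⟩
          have ht's' : t' < s' := by
            rcases eq_or_lt_of_le h2 with h | h
            · exfalso; rw [h] at hpos; linarith
            · exact h
          have hst' : f s < f t' + c :=
            hdd s t' (hAa.trans (hat.trans hts.le)) h1 (ht's'.trans_le h3)
          have hm1 : max (f s - f t - c) 0 = f s - f t - c := max_eq_left hpos2.le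
          have hm2 : max (f s' - f t' - c) 0 = f s' - f t' - c := max_eq_left hpos.le
          have hsum : sumGains f c l ≤ f s' - f t' - c := by rw [← hm2]; exact h4
          have : f s - f t - c + (f s' - f t' - c) ≤ f s' - f t - c := by linarith
          calc max (f s - f t - c) 0 + sumGains f c l
              ≤ f s - f t - c + (f s' - f t' - c) := by rw [hm1]; linarith
            _ ≤ f s' - f t - c := this
            _ ≤ max (f s' - f t - c) 0 := le_max_left _ _

lemma epoch_sum_le (hf : Continuous f) (hc : 0 < c) {a b : ℝ} (hab : a ≤ b)
    (hdd : ∀ u v : ℝ, a ≤ u → u ≤ v → v < b → f u < f v + c)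
    {l : List (ℝ × ℝ)} (hl : GoodList b a l) :
    sumGains f c l ≤ maxGainLT f c a b := by
  obtain ⟨t, s, h1, h2, h3, h4⟩ := epoch_pair hc hdd hl le_rfl hab
  rcases eq_or_lt_of_le h2 with h | h
  · refine h4.trans ?_
    rw [← h]
    have hz : max (f t - f t - c) 0 = 0 := max_eq_right (by linarith)
    rw [hz]
    exact maxGainLT_nonneg c a b
  · exact h4.trans (le_maxGainLT hf h1 h h3)

end UTVaux
namespace UTVaux

open Filter Topology

variable {f : ℝ → ℝ} {c : ℝ}

lemma max_add_le (x y : ℝ) : max (x + y) 0 ≤ max x 0 + max y 0 :=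
  max_le (add_le_add (le_max_left _ _) (le_max_left _ _))
    (by positivity)

lemma split_sum {β b M : ℝ} (hMβ : M ≤ β) (hfM : f β + c ≤ f M)
    (hint : ∀ t, M ≤ t → t < β → f M < f t + c) :
    ∀ {l : List (ℝ × ℝ)} {a : ℝ}, GoodList b a l →
      ∃ l₁ l₂, GoodList β a l₁ ∧ GoodList b (max a β) l₂ ∧
        sumGains f c l ≤ sumGains f c l₁ + sumGains f c l₂ := by
  intro l
  induction l with
  | nil =>
    intro a _
    exact ⟨List.nil, List.nil, .nil a, .nil _, by simp⟩
  | cons p l ih =>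
    rintro a hg
    obtain ⟨t, s⟩ := p
    cases hg with
    | cons hat hts hsb hl =>
      obtain ⟨l₁', l₂', hg1, hg2, hsum⟩ := ih hl
      rcases le_or_gt s β with hsβ | hβs
      · -- interval entirely to the left of `β`
        have hg2' : GoodList b (max a β) l₂' := by
          rw [max_eq_right ((hat.trans hts.le).trans hsβ)]
          rwa [max_eq_right hsβ] at hg2
        refine ⟨(t, s) :: l₁', l₂', .cons hat hts hsβ hg1, hg2', ?_⟩
        rw [sumGains_cons, sumGains_cons]
        linarith
      · have hg2' : GoodList b s l₂' := by rwa [max_eq_left hβs.le] at hg2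
        have hl1nil : l₁' = List.nil := goodList_eq_nil_of_gt hg1 hβs
        have hsum' : sumGains f c l ≤ sumGains f c l₂' := by
          rw [hl1nil, sumGains_nil] at hsum; linarith
        rcases le_or_gt β t with hβt | htβ
        · -- interval entirely to the right of `β`
          refine ⟨List.nil, (t, s) :: l₂', .nil a, .cons (max_le hat hβt) hts hsb hg2', ?_⟩
          rw [sumGains_cons, sumGains_cons, sumGains_nil]
          linarith
        · -- the interval straddles β : t < β < s
          rcases lt_or_ge t M with htM | hMt
          · refine ⟨(t, M) :: List.nil, (β, s) :: l₂',
              .cons hat htM hMβ (.nil M),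
              .cons (max_le (hat.trans htβ.le) le_rfl) hβs hsb hg2', ?_⟩
            rw [sumGains_cons, sumGains_cons, sumGains_cons, sumGains_nil]
            have hkey : max (f s - f t - c) 0
                ≤ max (f M - f t - c) 0 + max (f s - f β - c) 0 := by
              have h1 : f s - f t - c ≤ (f M - f t - c) + (f s - f β - c) := by linarith
              exact (max_le_max h1 le_rfl).trans (max_add_le _ _)
            linarith
          · have hft : f M < f t + c := hint t hMt htβ
            refine ⟨List.nil, (β, s) :: l₂', .nil a,
              .cons (max_le (hat.trans htβ.le) le_rfl) hβs hsb hg2', ?_⟩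
            rw [sumGains_cons, sumGains_cons, sumGains_nil]
            have hkey : max (f s - f t - c) 0 ≤ max (f s - f β - c) 0 :=
              max_le_max (by linarith) le_rfl
            linarith

section Main

variable (hf : Continuous f) (hc : 0 < c)
  (hrec : ∀ u : ℝ, 0 ≤ u → ∃ t, u < t ∧ f t + c ≤ sSup (f '' Set.Icc u t))

include hf hc hrec in
lemma utv_le (n : ℕ) :
    ∀ (b : ℝ) (l : List (ℝ × ℝ)), TcIter f c n ≤ b → b ≤ TcIter f c (n + 1) →
      GoodList b 0 l →
      sumGains f c l
        ≤ (∑ i ∈ Finset.range n, maxGainLT f c (TcIter f c i) (TcIter f c (i + 1)))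
          + maxGainLT f c (TcIter f c n) b := by
  induction n with
  | zero =>
    intro b l hb1 hb2 hg
    simp only [Finset.range_zero, Finset.sum_empty, zero_add]
    have h0 : (TcIter f c 0 : ℝ) = 0 := rfl
    refine epoch_sum_le hf hc (by rw [h0]; exact h0 ▸ hb1) ?_ (h0 ▸ hg)
    intro u v hu huv hv
    exact tcIter_epoch_lt hf hc hrec 0 hu huv (hv.trans_le hb2)
  | succ n ih =>
    intro b l hb1 hb2 hg
    have hττ : TcIter f c n ≤ TcIter f c (n + 1) :=
      ((tcIter_strictMono hf hc hrec) (Nat.lt_succ_self n)).le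
    obtain ⟨M, hM1, hM2⟩ := exists_rmax hf hττ
    have hfM : f (TcIter f c (n + 1)) + c ≤ f M := by
      rw [hM2]; exact tcIter_drawdown hf hc hrec n
    have hint : ∀ u, M ≤ u → u < TcIter f c (n + 1) → f M < f u + c := fun u h1 h2 =>
      lt_of_le_of_lt (le_rmax hf hM1.1 h1)
        (tcIter_no_drawdown hf hc hrec n (hM1.1.trans h1) h2)
    obtain ⟨l₁, l₂, hg1, hg2, hsum⟩ := split_sum hM1.2 hfM hint hg
    have hβ0 : (0:ℝ) ≤ TcIter f c (n + 1) := tcIter_nonneg hf hc hrec (n + 1)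
    have hg2' : GoodList b (TcIter f c (n + 1)) l₂ := by
      rwa [max_eq_right hβ0] at hg2
    have h1 := ih (TcIter f c (n + 1)) l₁ hττ le_rfl hg1
    have h2 : sumGains f c l₂ ≤ maxGainLT f c (TcIter f c (n + 1)) b := by
      refine epoch_sum_le hf hc hb1 ?_ hg2'
      intro u v hu huv hv
      exact tcIter_epoch_lt hf hc hrec (n + 1) hu huv (hv.trans_le hb2)
    rw [Finset.sum_range_succ]
    linarith

lemma goodList_ofFn : ∀ {n : ℕ} (t s : Fin n → ℝ) (a b : ℝ),
    (∀ i, a ≤ t i) → (∀ i, s i ≤ b) → (∀ i, t i < s i) →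
    (∀ i j, i < j → s i < t j) →
    GoodList b a (List.ofFn fun i => (t i, s i)) := by
  intro n
  induction n with
  | zero =>
    intro t s a b _ _ _ _
    rw [List.ofFn_zero]
    exact .nil a
  | succ n ih =>
    intro t s a b h1 h2 h3 h4
    rw [List.ofFn_succ]
    exact .cons (h1 0) (h3 0) (h2 0)
      (ih (fun i => t i.succ) (fun i => s i.succ) (s 0) b
        (fun i => (h4 0 i.succ (Fin.succ_pos i)).le) (fun i => h2 i.succ)
        (fun i => h3 i.succ)
        (fun i j hij => h4 i.succ j.succ (Fin.succ_lt_succ_iff.2 hij)))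

lemma sumGains_ofFn {n : ℕ} (g : Fin n → ℝ × ℝ) :
    sumGains f c (List.ofFn g) = ∑ i, max (f (g i).2 - f (g i).1 - c) 0 := by
  simp [sumGains, List.map_ofFn, List.sum_ofFn, Function.comp]

include hf hc hrec in
lemma utv_le_total {n : ℕ} {b : ℝ} (hb1 : TcIter f c n ≤ b)
    (hb2 : b ≤ TcIter f c (n + 1)) :
    UTV f c 0 b
      ≤ (∑ i ∈ Finset.range n, maxGainLT f c (TcIter f c i) (TcIter f c (i + 1)))
        + maxGainLT f c (TcIter f c n) b := by
  refine csSup_le ⟨0, 0, Fin.elim0, Fin.elim0, fun i => i.elim0, fun i => i.elim0,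
    fun i => i.elim0, fun i j _ => i.elim0, by simp⟩ ?_
  rintro x ⟨m, t, s, h1, h2, h3, h4, rfl⟩
  have h := utv_le hf hc hrec n b (List.ofFn fun i => (t i, s i)) hb1 hb2
    (goodList_ofFn t s 0 b h1 h2 h3 h4)
  rwa [sumGains_ofFn] at h

end Main

end UTVaux
namespace UTVaux

open Filter Topology

variable {f : ℝ → ℝ} {c : ℝ}

lemma exists_pair (hf : Continuous f) {a b : ℝ} (hab : a < b) {ε : ℝ} (hε : 0 < ε) :
    ∃ u v : ℝ, a ≤ u ∧ u < v ∧ v < b ∧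
      maxGainLT f c a b - ε ≤ max (f v - f u - c) 0 := by
  rcases le_or_gt (maxGainLT f c a b) ε with hG | hG
  · refine ⟨a, (a + b) / 2, le_rfl, by linarith, by linarith, ?_⟩
    have := le_max_right (f ((a + b) / 2) - f a - c) 0
    linarith
  · have hne : {x | ∃ t s : ℝ, a ≤ t ∧ t < s ∧ s ≤ b ∧
        x = max (f s - f t - c) 0}.Nonempty := ⟨_, a, b, le_rfl, hab, le_rfl, rfl⟩
    obtain ⟨x, hx, hxlt⟩ := exists_lt_of_lt_csSup hne
      (show maxGainLT f c a b - ε / 2 < maxGainLT f c a b by linarith)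
    obtain ⟨u, v, h1, h2, h3, rfl⟩ := hx
    obtain ⟨δ, hδ0, hδ'⟩ := Metric.continuousAt_iff.mp (hf.continuousAt (x := v))
      (ε / 2) (by linarith)
    set v' := max ((u + v) / 2) (v - δ / 2) with hv'
    have huv' : u < v' := lt_max_of_lt_left (by linarith)
    have hv'v : v' < v := max_lt (by linarith) (by linarith)
    have hd : dist v' v < δ := by
      rw [Real.dist_eq, abs_of_nonpos (by linarith)]
      have : v - δ / 2 ≤ v' := le_max_right _ _
      linarith
    have hfv : f v - ε / 2 ≤ f v' := by
      have h := hδ' hd; rw [Real.dist_eq, abs_lt] at h; linarith [h.1]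
    refine ⟨u, v', h1, huv', hv'v.trans_le h3, ?_⟩
    have hstep : max (f v - f u - c) 0 - ε / 2 ≤ max (f v' - f u - c) 0 := by
      rcases le_or_gt (f v - f u - c) 0 with h | h
      · have := le_max_right (f v' - f u - c) 0
        rw [max_eq_right h]; linarith
      · rw [max_eq_left h.le]
        have := le_max_left (f v' - f u - c) 0
        linarith
    linarith

lemma sum_le_utv (hf : Continuous f) (hc : 0 < c) {T : ℝ}
    (hbdd : BddAbove {x | ∃ (n : ℕ) (t s : Fin n → ℝ),
      (∀ i, (0:ℝ) ≤ t i) ∧ (∀ i, s i ≤ T) ∧ (∀ i, t i < s i) ∧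
      (∀ i j : Fin n, i < j → s i < t j) ∧
      x = ∑ i : Fin n, max (f (s i) - f (t i) - c) 0})
    {m : ℕ} (a b : ℕ → ℝ) (h0 : ∀ i < m, (0:ℝ) ≤ a i) (hab : ∀ i < m, a i < b i)
    (hba : ∀ i, i + 1 < m → b i ≤ a (i + 1)) (hbT : ∀ i < m, b i ≤ T) :
    (∑ i ∈ Finset.range m, maxGainLT f c (a i) (b i)) ≤ UTV f c 0 T := by
  have hchain : ∀ i j : ℕ, i < j → j < m → b i ≤ a j := by
    intro i j hij hjm
    induction j with
    | zero => omega
    | succ j ihj =>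
      rcases Nat.lt_or_ge i j with h | h
      · exact (ihj h (by omega)).trans ((hab j (by omega)).le.trans (hba j hjm))
      · have hji : i = j := by omega
        subst hji
        exact hba i hjm
  have h0mem : (0:ℝ) ∈ {x | ∃ (n : ℕ) (t s : Fin n → ℝ),
      (∀ i, (0:ℝ) ≤ t i) ∧ (∀ i, s i ≤ T) ∧ (∀ i, t i < s i) ∧
      (∀ i j : Fin n, i < j → s i < t j) ∧
      x = ∑ i : Fin n, max (f (s i) - f (t i) - c) 0} :=
    ⟨0, Fin.elim0, Fin.elim0, fun i => i.elim0, fun i => i.elim0, fun i => i.elim0,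
      fun i j _ => i.elim0, by simp⟩
  rcases Nat.eq_zero_or_pos m with hm | hm
  · subst hm
    simp only [Finset.range_zero, Finset.sum_empty]
    exact le_csSup hbdd h0mem
  · refine le_of_forall_pos_le_add ?_
    intro ε hε
    set ε' := ε / m with hε'def
    have hε' : 0 < ε' := by positivity
    have hch : ∀ i : Fin m, ∃ u v : ℝ, a i ≤ u ∧ u < v ∧ v < b i ∧
        maxGainLT f c (a i) (b i) - ε' ≤ max (f v - f u - c) 0 :=
      fun i => exists_pair hf (hab i i.2) hε'
    choose u v hu huv hvb hval using hch
    have hmem : (∑ i : Fin m, max (f (v i) - f (u i) - c) 0)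
        ∈ {x | ∃ (n : ℕ) (t s : Fin n → ℝ),
          (∀ i, (0:ℝ) ≤ t i) ∧ (∀ i, s i ≤ T) ∧ (∀ i, t i < s i) ∧
          (∀ i j : Fin n, i < j → s i < t j) ∧
          x = ∑ i : Fin n, max (f (s i) - f (t i) - c) 0} := by
      refine ⟨m, u, v, fun i => (h0 i i.2).trans (hu i),
        fun i => (hvb i).le.trans (hbT i i.2), huv, ?_, rfl⟩
      intro i j hij
      exact (hvb i).trans_le ((hchain i j hij j.2).trans (hu j))
    have hle : (∑ i : Fin m, max (f (v i) - f (u i) - c) 0) ≤ UTV f c 0 T :=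
      le_csSup hbdd hmem
    have hsum : (∑ i ∈ Finset.range m, maxGainLT f c (a i) (b i))
        ≤ (∑ i : Fin m, max (f (v i) - f (u i) - c) 0) + m * ε' := by
      rw [← Fin.sum_univ_eq_sum_range]
      have h := Finset.sum_le_sum (fun (i : Fin m) (_ : i ∈ Finset.univ) => hval i)
      rw [Finset.sum_sub_distrib, Finset.sum_const, Finset.card_univ, Fintype.card_fin,
        nsmul_eq_mul] at h
      linarith
    have hmε : (m : ℝ) * ε' = ε := by
      rw [hε'def]
      field_simp
    linarith

section DetMain

variable (hf : Continuous f) (hc : 0 < c)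
  (hrec : ∀ u : ℝ, 0 ≤ u → ∃ t, u < t ∧ f t + c ≤ sSup (f '' Set.Icc u t))

include hf hc hrec in
theorem det_main {T : ℝ} (hT : 0 < T) :
    UTV f c 0 T = ∑' i : ℕ, if TcIter f c i ≤ T then
        maxGainLT f c (TcIter f c i) (min (TcIter f c (i + 1)) T) else 0 := by
  classical
  have hex : ∃ k, T < TcIter f c k :=
    ((tcIter_tendsto hf hc hrec).eventually_gt_atTop T).exists
  have hmono := tcIter_strictMono hf hc hrec
  set N := Nat.find hex with hNdef
  have hNspec : T < TcIter f c N := Nat.find_spec hex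
  have hNmin : ∀ k < N, TcIter f c k ≤ T := fun k hk => not_lt.1 (Nat.find_min hex hk)
  have hN0 : N ≠ 0 := by
    intro h
    rw [h] at hNspec
    have h0 : TcIter f c 0 = 0 := rfl
    rw [h0] at hNspec; linarith
  obtain ⟨n, hn⟩ : ∃ n, N = n + 1 :=
    ⟨N - 1, (Nat.succ_pred_eq_of_pos (Nat.pos_of_ne_zero hN0)).symm⟩
  have hτn : TcIter f c n ≤ T := hNmin n (by omega)
  have hτn1 : T < TcIter f c (n + 1) := by rw [← hn]; exact hNspec
  -- reduce the series to a finite sum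
  have htsum : (∑' i : ℕ, if TcIter f c i ≤ T then
        maxGainLT f c (TcIter f c i) (min (TcIter f c (i + 1)) T) else 0)
      = ∑ i ∈ Finset.range (n + 1), (if TcIter f c i ≤ T then
        maxGainLT f c (TcIter f c i) (min (TcIter f c (i + 1)) T) else 0) := by
    refine tsum_eq_sum ?_
    intro i hi
    rw [if_neg]
    push_neg
    have hni : n + 1 ≤ i := by simpa using hi
    exact hτn1.trans_le (hmono.monotone hni)
  have hterm : ∀ i ∈ Finset.range n, (if TcIter f c i ≤ T then
        maxGainLT f c (TcIter f c i) (min (TcIter f c (i + 1)) T) else 0)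
      = maxGainLT f c (TcIter f c i) (TcIter f c (i + 1)) := by
    intro i hi
    have hi' := Finset.mem_range.mp hi
    rw [if_pos (hNmin i (by omega)), min_eq_left (hNmin (i + 1) (by omega))]
  have hlast : (if TcIter f c n ≤ T then
        maxGainLT f c (TcIter f c n) (min (TcIter f c (n + 1)) T) else 0)
      = maxGainLT f c (TcIter f c n) T := by
    rw [if_pos hτn, min_eq_right hτn1.le]
  rw [htsum, Finset.sum_range_succ, hlast, Finset.sum_congr rfl hterm]
  -- the two directions
  have hub := utv_le_total hf hc hrec hτn hτn1.le
  have helem : ∀ x ∈ {x | ∃ (m : ℕ) (t s : Fin m → ℝ),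
      (∀ i, (0:ℝ) ≤ t i) ∧ (∀ i, s i ≤ T) ∧ (∀ i, t i < s i) ∧
      (∀ i j : Fin m, i < j → s i < t j) ∧
      x = ∑ i : Fin m, max (f (s i) - f (t i) - c) 0},
      x ≤ (∑ i ∈ Finset.range n, maxGainLT f c (TcIter f c i) (TcIter f c (i + 1)))
        + maxGainLT f c (TcIter f c n) T := by
    rintro x ⟨m, t, s, h1, h2, h3, h4, rfl⟩
    have h := utv_le hf hc hrec n T (List.ofFn fun i => (t i, s i)) hτn hτn1.le
      (goodList_ofFn t s 0 T h1 h2 h3 h4)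
    rwa [sumGains_ofFn] at h
  have hbdd : BddAbove {x | ∃ (m : ℕ) (t s : Fin m → ℝ),
      (∀ i, (0:ℝ) ≤ t i) ∧ (∀ i, s i ≤ T) ∧ (∀ i, t i < s i) ∧
      (∀ i j : Fin m, i < j → s i < t j) ∧
      x = ∑ i : Fin m, max (f (s i) - f (t i) - c) 0} := ⟨_, helem⟩
  refine le_antisymm hub ?_
  rcases eq_or_lt_of_le hτn with heq | hlt
  · have hzero : maxGainLT f c (TcIter f c n) T = 0 := by
      rw [heq]; exact maxGainLT_of_ge le_rfl
    rw [hzero, add_zero]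
    refine sum_le_utv hf hc hbdd (fun i => TcIter f c i) (fun i => TcIter f c (i + 1))
      (fun i _ => tcIter_nonneg hf hc hrec i) (fun i _ => hmono (Nat.lt_succ_self i))
      (fun i _ => le_rfl) ?_
    intro i hi
    calc TcIter f c (i + 1) ≤ TcIter f c n := hmono.monotone (by omega)
      _ ≤ T := hτn
  · have hab' : ∀ i < n + 1, TcIter f c i < (if i = n then T else TcIter f c (i + 1)) := by
      intro i hi
      by_cases h' : i = n
      · subst h'; simpa using hlt
      · rw [if_neg h']; exact hmono (Nat.lt_succ_self i)
    have hba' : ∀ i, i + 1 < n + 1 →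
        (if i = n then T else TcIter f c (i + 1)) ≤ TcIter f c (i + 1) := by
      intro i hi
      rw [if_neg (by omega)]
    have hbT' : ∀ i < n + 1, (if i = n then T else TcIter f c (i + 1)) ≤ T := by
      intro i hi
      by_cases h' : i = n
      · subst h'; simp
      · rw [if_neg h']
        exact (hmono.monotone (by omega)).trans hτn
    have h := sum_le_utv hf hc hbdd (fun i => TcIter f c i)
      (fun i => if i = n then T else TcIter f c (i + 1))
      (fun i _ => tcIter_nonneg hf hc hrec i) hab' hba' hbT'
    beta_reduce at h
    rw [Finset.sum_range_succ, if_pos rfl] at h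
    have hcongr : ∀ i ∈ Finset.range n,
        maxGainLT f c (TcIter f c i) (if i = n then T else TcIter f c (i + 1))
          = maxGainLT f c (TcIter f c i) (TcIter f c (i + 1)) := by
      intro i hi
      rw [if_neg (by have := Finset.mem_range.mp hi; omega)]
    rwa [Finset.sum_congr rfl hcongr] at h

end DetMain

end UTVaux
namespace UTVaux

open Filter Topology MeasureTheory ProbabilityTheory

variable {Ω : Type*} [MeasurableSpace Ω] {P : Measure Ω} [IsProbabilityMeasure P]
  {B : ℝ → Ω → ℝ}

lemma recurrence (hB : IsStdBrownianMotion P B) (μ c : ℝ) (q : ℝ) (hq : 0 ≤ q) :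
    ∀ᵐ ω ∂P, ∃ k : ℕ, B (q + k + 1) ω - B (q + k) ω ≤ -c - μ := by
  set Y : ℕ → Ω → ℝ := fun k ω => B (q + k + 1) ω - B (q + k) ω with hY
  have hmeasY : ∀ k : ℕ, Measurable (Y k) := fun k => (hB.meas _).sub (hB.meas _)
  have hmap : ∀ k : ℕ, P.map (Y k) = gaussianReal 0 1 := by
    intro k
    have h := hB.gauss_incr (q + k) (q + k + 1) (by positivity) (by linarith)
    have harg : Real.toNNReal (q + k + 1 - (q + k)) = 1 := by norm_num
    rw [harg] at h
    exact h
  set r : ENNReal := gaussianReal 0 1 (Set.Ioi (-c - μ)) with hr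
  have hfac : ∀ k : ℕ, P (Y k ⁻¹' Set.Ioi (-c - μ)) = r := by
    intro k
    rw [← Measure.map_apply (hmeasY k) measurableSet_Ioi, hmap k]
  have hrlt : r < 1 := by
    have hp : gaussianReal 0 1 (Set.Iic (-c - μ)) ≠ 0 := by
      intro h
      have hac := gaussianReal_absolutelyContinuous' 0 (v := 1) one_ne_zero
      have := hac h
      rw [Real.volume_Iic] at this
      exact ENNReal.top_ne_zero this
    have hcompl : Set.Ioi (-c - μ) = (Set.Iic (-c - μ))ᶜ := (Set.compl_Iic).symm
    rw [hr, hcompl, measure_compl measurableSet_Iic (measure_ne_top _ _),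
      measure_univ]
    exact ENNReal.sub_lt_self ENNReal.one_ne_top one_ne_zero hp
  set Bad : Set Ω := ⋂ k : ℕ, Y k ⁻¹' Set.Ioi (-c - μ) with hBad
  have hBadle : ∀ n : ℕ, P Bad ≤ r ^ n := by
    intro n
    have hind := hB.indep_incr n (fun i => q + ((i : ℕ) : ℝ))
      (fun i j hij => by
        have h : ((i : ℕ) : ℝ) ≤ ((j : ℕ) : ℝ) := by exact_mod_cast (show (i:ℕ) ≤ (j:ℕ) from hij)
        simpa using add_le_add_left h q)
      (fun i => by positivity)
    have heq : (fun i : Fin n => fun ω =>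
        B (q + ((i.succ : Fin (n + 1)) : ℕ)) ω - B (q + ((i.castSucc : Fin (n + 1)) : ℕ)) ω)
        = fun i : Fin n => Y (i : ℕ) := by
      funext i ω
      have h1 : (q + (((i.succ : Fin (n + 1)) : ℕ) : ℝ)) = q + (i : ℕ) + 1 := by
        rw [Fin.val_succ]; push_cast; ring
      have h2 : (q + (((i.castSucc : Fin (n + 1)) : ℕ) : ℝ)) = q + (i : ℕ) := by
        rw [Fin.coe_castSucc]
      rw [h1, h2]
    rw [heq] at hind
    have key := hind.measure_inter_preimage_eq_mul (S := Finset.univ)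
      (sets := fun _ => Set.Ioi (-c - μ)) (fun i _ => measurableSet_Ioi)
    beta_reduce at key
    have hprod : (∏ i : Fin n, P (Y (i : ℕ) ⁻¹' Set.Ioi (-c - μ))) = r ^ n := by
      have hconst : ∀ i : Fin n, P (Y (i : ℕ) ⁻¹' Set.Ioi (-c - μ)) = r := fun i => hfac _
      simp [hconst]
    have hsub : Bad ⊆ ⋂ i ∈ (Finset.univ : Finset (Fin n)), Y (i : ℕ) ⁻¹' Set.Ioi (-c - μ) := by
      intro ω hω
      simp only [Set.mem_iInter]
      intro i _
      exact Set.mem_iInter.mp hω (i : ℕ)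
    calc P Bad ≤ P (⋂ i ∈ (Finset.univ : Finset (Fin n)), Y (i : ℕ) ⁻¹' Set.Ioi (-c - μ)) :=
          measure_mono hsub
      _ = ∏ i : Fin n, P (Y (i : ℕ) ⁻¹' Set.Ioi (-c - μ)) := key
      _ = r ^ n := hprod
  have hBad0 : P Bad = 0 := by
    refine le_antisymm ?_ zero_le
    have htd : Tendsto (fun n : ℕ => r ^ n) atTop (𝓝 0) :=
      ENNReal.tendsto_pow_atTop_nhds_zero_of_lt_one hrlt
    exact ge_of_tendsto' htd hBadle
  have hset : {ω | ¬∃ k : ℕ, Y k ω ≤ -c - μ} = Bad := by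
    ext ω
    simp only [Set.mem_setOf_eq, not_exists, not_le, hBad, Set.mem_iInter, Set.mem_preimage,
      Set.mem_Ioi]
  rw [ae_iff]
  rw [show {ω | ¬∃ k : ℕ, Y k ω ≤ -c - μ} = Bad from hset]
  exact hBad0

end UTVaux
/-- Iterated decomposition: for every `μ`, `c > 0` and `T > 0`, almost surely
`UTV_μ^c[0,T] = Σ_{i ≥ 1 : T_c^{(i-1)} ≤ T} sup_{T_c^{(i-1)} ≤ t < s ≤ T_c^{(i)} ∧ T} (W_s - W_t - c)₊`. -/
theorem UTV_iterated_decomposition {Ω : Type*} [MeasurableSpace Ω] (P : Measure Ω)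
    [IsProbabilityMeasure P] (B : ℝ → Ω → ℝ) (hB : IsStdBrownianMotion P B)
    (μ c T : ℝ) (hc : 0 < c) (hT : 0 < T) :
    ∀ᵐ ω ∂P,
      UTV (fun t => B t ω + μ * t) c 0 T
        = ∑' i : ℕ,
            if TcIter (fun t => B t ω + μ * t) c i ≤ T then
              maxGainLT (fun t => B t ω + μ * t) c (TcIter (fun t => B t ω + μ * t) c i)
                (min (TcIter (fun t => B t ω + μ * t) c (i + 1)) T)
            else 0 := by
  have hrecq : ∀ q : ℚ, ∀ᵐ ω ∂P, 0 ≤ (q : ℝ) →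
      ∃ k : ℕ, B ((q : ℝ) + k + 1) ω - B ((q : ℝ) + k) ω ≤ -c - μ := by
    intro q
    rcases le_or_gt 0 (q : ℝ) with hq | hq
    · filter_upwards [UTVaux.recurrence hB μ c (q : ℝ) hq] with ω h _ using h
    · filter_upwards with ω h
      exact absurd h (not_le.2 hq)
  have hall : ∀ᵐ ω ∂P, ∀ q : ℚ, 0 ≤ (q : ℝ) →
      ∃ k : ℕ, B ((q : ℝ) + k + 1) ω - B ((q : ℝ) + k) ω ≤ -c - μ := ae_all_iff.2 hrecq
  filter_upwards [hall, hB.cont] with ω hω hcont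
  set f : ℝ → ℝ := fun t => B t ω + μ * t with hfdef
  have hf : Continuous f := hcont.add (continuous_const.mul continuous_id)
  have hrec : ∀ u : ℝ, 0 ≤ u → ∃ t, u < t ∧ f t + c ≤ sSup (f '' Set.Icc u t) := by
    intro u hu
    obtain ⟨q, hq⟩ := exists_rat_gt u
    have hq0 : 0 ≤ (q : ℝ) := hu.trans hq.le
    obtain ⟨k, hk⟩ := hω q hq0
    have hk0 : (0 : ℝ) ≤ (k : ℕ) := Nat.cast_nonneg k
    have hut : u < (q : ℝ) + k + 1 := by linarith
    have hstep : f ((q : ℝ) + k + 1) + c ≤ f ((q : ℝ) + k) := by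
      show B ((q : ℝ) + k + 1) ω + μ * ((q : ℝ) + k + 1) + c
        ≤ B ((q : ℝ) + k) ω + μ * ((q : ℝ) + k)
      have hmu : μ * ((q : ℝ) + k + 1) = μ * ((q : ℝ) + k) + μ := by ring
      linarith
    refine ⟨(q : ℝ) + k + 1, hut, ?_⟩
    refine hstep.trans (le_csSup (UTVaux.bddAbove_img hf u _)
      ⟨(q : ℝ) + k, ⟨by linarith, by linarith⟩, rfl⟩)
  exact UTVaux.det_main hf hc hrec hT
end

section
/- For every μ ∈ ℝ and c > 0, the first drawdown time T_c satisfies P(T_c < (1/3) E[T_c]) ≤ 7/9; equivalently, P(T_c ≥ (1/3) E[T_c]) ≥ 2/9. -/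
open MeasureTheory ProbabilityTheory Real Set

namespace DDP
open Filter Topology
set_option linter.unusedSectionVars false
set_option linter.unusedVariables false
set_option linter.unusedTactic false
set_option linter.unreachableTactic false


variable {g : ℝ → ℝ} {c : ℝ}

def dset (g : ℝ → ℝ) (c : ℝ) : Set ℝ := {t | 0 ≤ t ∧ g t + c ≤ sSup (g '' Set.Icc 0 t)}

lemma dset_bddBelow : BddBelow (dset g c) := ⟨0, fun _ h => h.1⟩

lemma mem_dset_of_pair (hg : Continuous g) {s u : ℝ} (hs : 0 ≤ s) (hsu : s ≤ u)
    (h : c ≤ g s - g u) : u ∈ dset g c := by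
  refine ⟨hs.trans hsu, ?_⟩
  have h2 : g s ≤ sSup (g '' Icc 0 u) :=
    le_csSup (isCompact_Icc.image_of_continuousOn hg.continuousOn).bddAbove
      ⟨s, ⟨hs, hsu⟩, rfl⟩
  linarith

lemma pair_of_mem_dset (hg : Continuous g) {t : ℝ} (ht : t ∈ dset g c) :
    ∃ s, 0 ≤ s ∧ s ≤ t ∧ c ≤ g s - g t := by
  obtain ⟨ht0, hts⟩ := ht
  obtain ⟨s, hsmem, hmax⟩ := isCompact_Icc.exists_isMaxOn (nonempty_Icc.2 ht0) hg.continuousOn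
  have hsup : sSup (g '' Icc 0 t) = g s := by
    refine IsGreatest.csSup_eq ⟨⟨s, hsmem, rfl⟩, ?_⟩
    rintro _ ⟨y, hy, rfl⟩; exact hmax hy
  rw [hsup] at hts
  exact ⟨s, hsmem.1, hsmem.2, by linarith⟩

lemma exists_pair_of_forall (hg : Continuous g) {α β : ℝ} (hab : α ≤ β)
    (H : ∀ d : ℕ, ∃ x y, x ∈ Icc α β ∧ y ∈ Icc α β ∧ x ≤ y ∧ c - 1/(d+1) ≤ g x - g y) :
    ∃ x y, x ∈ Icc α β ∧ y ∈ Icc α β ∧ x ≤ y ∧ c ≤ g x - g y := by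
  set K : Set (ℝ × ℝ) := (Icc α β ×ˢ Icc α β) ∩ {p | p.1 ≤ p.2} with hKdef
  have hK : IsCompact K := (isCompact_Icc.prod isCompact_Icc).inter_right
    (isClosed_le continuous_fst continuous_snd)
  have hKne : K.Nonempty := ⟨(α, α), ⟨⟨le_refl _, hab⟩, ⟨le_refl _, hab⟩⟩,
    show (α:ℝ) ≤ α from le_refl _⟩
  have hcont : ContinuousOn (fun p : ℝ × ℝ => g p.1 - g p.2) K :=
    ((hg.comp continuous_fst).sub (hg.comp continuous_snd)).continuousOn
  obtain ⟨p, hpK, hpmax⟩ := hK.exists_isMaxOn hKne hcont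
  refine ⟨p.1, p.2, hpK.1.1, hpK.1.2, hpK.2, ?_⟩
  by_contra hlt; push_neg at hlt
  obtain ⟨d, hd⟩ := exists_nat_one_div_lt (show 0 < c - (g p.1 - g p.2) by linarith)
  obtain ⟨x, y, hx, hy, hxy, hval⟩ := H d
  have hmem : (x, y) ∈ K := ⟨⟨hx, hy⟩, hxy⟩
  have h2 : g x - g y ≤ g p.1 - g p.2 := hpmax hmem
  have : (1:ℝ)/(d+1) < c - (g p.1 - g p.2) := hd
  linarith

lemma grid_of_pair (hg : Continuous g) {a : ℝ} (ha : 0 < a) (k : ℕ) {s u : ℝ}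
    (hs : k*a ≤ s) (hsu : s ≤ u) (hu : u ≤ k*a + a) (hval : c ≤ g s - g u) (d : ℕ) :
    ∃ i : ℕ, ∃ l l' : ℕ, l ≤ l' ∧ l' ≤ 2^i ∧
      c - 1/(d+1) ≤ g (k*a + l*(a/2^i)) - g (k*a + l'*(a/2^i)) := by
  have hd1 : (0:ℝ) < (d:ℝ) + 1 := by positivity
  set ε : ℝ := 1/(2*((d:ℝ)+1)) with hεdef
  have hε : 0 < ε := by positivity
  have hUC : UniformContinuousOn g (Icc (k*a) (k*a+a)) :=
    isCompact_Icc.uniformContinuousOn_of_continuous hg.continuousOn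
  rw [Metric.uniformContinuousOn_iff] at hUC
  obtain ⟨δ, hδ, hδ'⟩ := hUC ε hε
  obtain ⟨i, hi⟩ : ∃ i : ℕ, a / 2^i < δ := by
    obtain ⟨i, hi⟩ := pow_unbounded_of_one_lt (a/δ) (one_lt_two (α := ℝ))
    refine ⟨i, ?_⟩
    rw [div_lt_iff₀ hδ] at hi
    rw [div_lt_iff₀ (pow_pos two_pos i)]
    linarith
  refine ⟨i, ?_⟩
  have hh : (0:ℝ) < a/2^i := by positivity
  have hs0 : 0 ≤ (s - k*a)/(a/2^i) := div_nonneg (by linarith) hh.le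
  have hu0 : 0 ≤ (u - k*a)/(a/2^i) := div_nonneg (by linarith) hh.le
  refine ⟨⌊(s - k*a)/(a/2^i)⌋₊, ⌈(u - k*a)/(a/2^i)⌉₊, ?_, ?_, ?_⟩
  · exact (Nat.floor_mono (by gcongr <;> linarith)).trans (Nat.floor_le_ceil _)
  · rw [Nat.ceil_le, div_le_iff₀ hh]
    have h2 : (2:ℝ)^i * (a/2^i) = a := by field_simp
    push_cast
    rw [h2]; linarith
  · set l := ⌊(s - k*a)/(a/2^i)⌋₊ with hldef
    set l' := ⌈(u - k*a)/(a/2^i)⌉₊ with hl'def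
    have hxs : (l:ℝ)*(a/2^i) ≤ s - k*a := by
      rw [← le_div_iff₀ hh]; exact Nat.floor_le hs0
    have hsx : s - k*a < (l:ℝ)*(a/2^i) + (a/2^i) := by
      have h3 : (s - k*a)/(a/2^i) < (l:ℝ) + 1 := Nat.lt_floor_add_one _
      rw [div_lt_iff₀ hh] at h3; linarith [h3]
    have huy : u - k*a ≤ (l':ℝ)*(a/2^i) := by
      rw [← div_le_iff₀ hh]; exact Nat.le_ceil _
    have hyu : (l':ℝ)*(a/2^i) < (u - k*a) + (a/2^i) := by
      have h3 : (l':ℝ) < (u - k*a)/(a/2^i) + 1 := Nat.ceil_lt_add_one hu0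
      have h4 : ((u - k*a)/(a/2^i) + 1) * (a/2^i) = (u - k*a) + (a/2^i) := by field_simp
      nlinarith [h3, hh]
    set x := (k:ℝ)*a + l*(a/2^i) with hxdef
    set y := (k:ℝ)*a + l'*(a/2^i) with hydef
    have hl'a : (l':ℝ)*(a/2^i) ≤ a := by
      have : (l':ℝ) ≤ (2:ℝ)^i := by
        have h5 : l' ≤ 2^i := by
          rw [Nat.ceil_le, div_le_iff₀ hh]
          have h2 : (2:ℝ)^i * (a/2^i) = a := by field_simp
          push_cast
          rw [h2]; linarith
        exact_mod_cast h5
      calc (l':ℝ)*(a/2^i) ≤ (2:ℝ)^i * (a/2^i) := by nlinarith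
        _ = a := by field_simp
    have hl0 : (0:ℝ) ≤ (l:ℝ)*(a/2^i) := mul_nonneg (Nat.cast_nonneg l) hh.le
    have hl'0 : (0:ℝ) ≤ (l':ℝ)*(a/2^i) := mul_nonneg (Nat.cast_nonneg l') hh.le
    have hxmem : x ∈ Icc ((k:ℝ)*a) (k*a+a) := ⟨by rw [hxdef]; linarith, by rw [hxdef]; linarith⟩
    have hymem : y ∈ Icc ((k:ℝ)*a) (k*a+a) := ⟨by rw [hydef]; linarith, by rw [hydef]; linarith⟩
    have hsmem : s ∈ Icc ((k:ℝ)*a) (k*a+a) := ⟨hs, by linarith⟩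
    have humem : u ∈ Icc ((k:ℝ)*a) (k*a+a) := ⟨by linarith, hu⟩
    have hgx : dist (g x) (g s) < ε := by
      apply hδ' x hxmem s hsmem
      rw [Real.dist_eq, abs_lt]
      constructor
      · rw [hxdef]; linarith
      · rw [hxdef]; linarith
    have hgy : dist (g y) (g u) < ε := by
      apply hδ' y hymem u humem
      rw [Real.dist_eq, abs_lt]
      constructor
      · rw [hydef]; linarith
      · rw [hydef]; linarith
    rw [Real.dist_eq, abs_lt] at hgx hgy
    have hεe : 2*ε = 1/((d:ℝ)+1) := by rw [hεdef]; field_simp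
    have : c - 2*ε ≤ g x - g y := by linarith [hgx.1, hgx.2, hgy.1, hgy.2]
    rw [hεe] at this
    exact this


noncomputable section
variable {Ω : Type*} [MeasurableSpace Ω]


def Ygrid (B : ℝ → Ω → ℝ) (a : ℝ) (i p : ℕ) : Ω → ℝ :=
  fun ω => B (((p:ℝ)+1) * (a/2^i)) ω - B ((p:ℝ) * (a/2^i)) ω

def vecB (B : ℝ → Ω → ℝ) (a : ℝ) (i k : ℕ) : Ω → (Fin (2^i) → ℝ) :=
  fun ω l => Ygrid B a (i) (k*2^i + l) ω

def Sset (μ c a : ℝ) (i d : ℕ) : Set (Fin (2^i) → ℝ) :=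
  ⋃ (l : ℕ) (l' : ℕ) (_ : l ≤ l') (_ : l' ≤ 2^i),
    {v | c - 1/((d:ℝ)+1) ≤
      -((∑ p ∈ Finset.Ico l l', (if hp : p < 2^i then v ⟨p, hp⟩ else 0))
        + μ * (((l':ℝ) - (l:ℝ)) * (a/2^i)))}

def Ev (B : ℝ → Ω → ℝ) (μ c a : ℝ) (k i d : ℕ) : Set Ω :=
  vecB B a i k ⁻¹' (Sset μ c a i d)

lemma Sset_meas (μ c a : ℝ) (i d : ℕ) : MeasurableSet (Sset μ c a i d) := by
  apply MeasurableSet.iUnion; intro l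
  apply MeasurableSet.iUnion; intro l'
  apply MeasurableSet.iUnion; intro _
  apply MeasurableSet.iUnion; intro _
  have hmeas : Measurable fun v : Fin (2^i) → ℝ =>
      -((∑ p ∈ Finset.Ico l l', (if hp : p < 2^i then v ⟨p, hp⟩ else 0))
        + μ * (((l':ℝ) - (l:ℝ)) * (a/2^i))) := by
    apply Measurable.neg
    apply Measurable.add_const
    apply Finset.measurable_sum
    intro p _
    split
    · exact measurable_pi_apply _
    · exact measurable_const
  exact measurableSet_le measurable_const hmeas

lemma Ygrid_meas {B : ℝ → Ω → ℝ} (hm : ∀ t, Measurable (B t)) (a : ℝ) (i p : ℕ) :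
    Measurable (Ygrid B a i p) := (hm _).sub (hm _)

lemma vecB_meas {B : ℝ → Ω → ℝ} (hm : ∀ t, Measurable (B t)) (a : ℝ) (i k : ℕ) :
    Measurable (vecB B a i k) :=
  measurable_pi_lambda _ fun _ => Ygrid_meas hm a i _

lemma Ev_meas {B : ℝ → Ω → ℝ} (hm : ∀ t, Measurable (B t)) (μ c a : ℝ) (k i d : ℕ) :
    MeasurableSet (Ev B μ c a k i d) :=
  (vecB_meas hm a i k) (Sset_meas μ c a i d)

lemma mem_Ev {B : ℝ → Ω → ℝ} {μ c a : ℝ} (ha : 0 < a) {k i d : ℕ} {ω : Ω} :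
    ω ∈ Ev B μ c a k i d ↔ ∃ l l' : ℕ, l ≤ l' ∧ l' ≤ 2^i ∧
      c - 1/((d:ℝ)+1) ≤ (B (k*a + l*(a/2^i)) ω + μ * (k*a + l*(a/2^i)))
        - (B (k*a + l'*(a/2^i)) ω + μ * (k*a + l'*(a/2^i))) := by
  have h2 : (0:ℝ) < 2^i := by positivity
  have harg : ∀ q : ℕ, ((k*2^i+q : ℕ):ℝ) * (a/2^i) = k*a + q*(a/2^i) := by
    intro q; push_cast; field_simp
  constructor
  · rintro hω
    simp only [Ev, Set.mem_preimage, Sset, Set.mem_iUnion] at hω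
    obtain ⟨l, l', hll', hl'J, hval⟩ := hω
    refine ⟨l, l', hll', hl'J, ?_⟩
    simp only [Set.mem_setOf_eq] at hval
    have hsum : (∑ p ∈ Finset.Ico l l', (if hp : p < 2^i then vecB B a i k ω ⟨p, hp⟩ else 0))
        = B (k*a + l'*(a/2^i)) ω - B (k*a + l*(a/2^i)) ω := by
      have hterm : ∀ p ∈ Finset.Ico l l',
          (if hp : p < 2^i then vecB B a i k ω ⟨p, hp⟩ else 0)
          = B (k*a + (p+1:ℕ)*(a/2^i)) ω - B (k*a + (p:ℕ)*(a/2^i)) ω := by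
        intro p hp
        have hpJ : p < 2^i := lt_of_lt_of_le (Finset.mem_Ico.mp hp).2 hl'J
        rw [dif_pos hpJ]
        show Ygrid B a i (k*2^i + p) ω = _
        unfold Ygrid
        rw [show ((k*2^i+p : ℕ):ℝ) + 1 = ((k*2^i+(p+1) : ℕ):ℝ) by push_cast; ring]
        rw [harg, harg]
      rw [Finset.sum_congr rfl hterm]
      rw [Finset.sum_Ico_eq_sub _ hll']
      rw [Finset.sum_range_sub (fun p => B (k*a + (p:ℕ)*(a/2^i)) ω),
          Finset.sum_range_sub (fun p => B (k*a + (p:ℕ)*(a/2^i)) ω)]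
      push_cast
      ring
    rw [hsum] at hval
    push_cast at hval ⊢
    linarith
  · rintro ⟨l, l', hll', hl'J, hval⟩
    simp only [Ev, Set.mem_preimage, Sset, Set.mem_iUnion]
    refine ⟨l, l', hll', hl'J, ?_⟩
    simp only [Set.mem_setOf_eq]
    have hsum : (∑ p ∈ Finset.Ico l l', (if hp : p < 2^i then vecB B a i k ω ⟨p, hp⟩ else 0))
        = B (k*a + l'*(a/2^i)) ω - B (k*a + l*(a/2^i)) ω := by
      have hterm : ∀ p ∈ Finset.Ico l l',
          (if hp : p < 2^i then vecB B a i k ω ⟨p, hp⟩ else 0)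
          = B (k*a + (p+1:ℕ)*(a/2^i)) ω - B (k*a + (p:ℕ)*(a/2^i)) ω := by
        intro p hp
        have hpJ : p < 2^i := lt_of_lt_of_le (Finset.mem_Ico.mp hp).2 hl'J
        rw [dif_pos hpJ]
        show Ygrid B a i (k*2^i + p) ω = _
        unfold Ygrid
        rw [show ((k*2^i+p : ℕ):ℝ) + 1 = ((k*2^i+(p+1) : ℕ):ℝ) by push_cast; ring]
        rw [harg, harg]
      rw [Finset.sum_congr rfl hterm]
      rw [Finset.sum_Ico_eq_sub _ hll']
      rw [Finset.sum_range_sub (fun p => B (k*a + (p:ℕ)*(a/2^i)) ω),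
          Finset.sum_range_sub (fun p => B (k*a + (p:ℕ)*(a/2^i)) ω)]
      push_cast
      ring
    rw [hsum]
    push_cast at hval ⊢
    linarith

lemma Ev_mono_i {B : ℝ → Ω → ℝ} {μ c a : ℝ} (ha : 0 < a) (k i d : ℕ) :
    Ev B μ c a k i d ⊆ Ev B μ c a k (i+1) d := by
  intro ω hω
  rw [mem_Ev ha] at hω ⊢
  obtain ⟨l, l', hll', hl'J, hval⟩ := hω
  refine ⟨2*l, 2*l', by omega, by rw [pow_succ]; omega, ?_⟩
  have e1 : ((2*l : ℕ):ℝ) * (a/2^(i+1)) = (l:ℝ) * (a/2^i) := by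
    push_cast; rw [pow_succ]; field_simp
  have e2 : ((2*l' : ℕ):ℝ) * (a/2^(i+1)) = (l':ℝ) * (a/2^i) := by
    push_cast; rw [pow_succ]; field_simp
  push_cast at e1 e2 ⊢
  rw [e1, e2]
  push_cast at hval
  exact hval

lemma Ev_anti_d {B : ℝ → Ω → ℝ} {μ c a : ℝ} (ha : 0 < a) (k i d : ℕ) :
    Ev B μ c a k i (d+1) ⊆ Ev B μ c a k i d := by
  intro ω hω
  rw [mem_Ev ha] at hω ⊢
  obtain ⟨l, l', hll', hl'J, hval⟩ := hω
  refine ⟨l, l', hll', hl'J, ?_⟩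
  have : (1:ℝ)/((d:ℕ)+1) ≥ 1/(((d:ℕ)+1)+1) := by
    apply div_le_div_of_nonneg_left <;> push_cast <;> linarith
  push_cast at hval this ⊢
  linarith



variable {P : Measure Ω} [IsProbabilityMeasure P] {B : ℝ → Ω → ℝ} {a : ℝ}

lemma Ygrid_indep (hB : IsStdBrownianMotion P B) (ha : 0 < a) (i : ℕ) :
    iIndepFun (Ygrid B a i) P := by
  rw [iIndepFun_iff_measure_inter_preimage_eq_mul]
  intro S sets hsets
  set n := S.sup id + 1 with hn
  have hmem : ∀ p ∈ S, p < n := fun p hp => Nat.lt_succ_of_le (Finset.le_sup (f := id) hp)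
  have hh : (0:ℝ) < a/2^i := by positivity
  have hmono : Monotone (fun q : Fin (n+1) => (q:ℝ) * (a/2^i)) := by
    intro q q' hqq'
    have hle : ((q:ℕ):ℝ) ≤ ((q':ℕ):ℝ) := by exact_mod_cast hqq'
    exact mul_le_mul_of_nonneg_right hle hh.le
  have hpos : ∀ q : Fin (n+1), 0 ≤ (q:ℝ) * (a/2^i) :=
    fun q => mul_nonneg (Nat.cast_nonneg _) hh.le
  have hI := hB.indep_incr n (fun q => (q:ℝ) * (a/2^i)) hmono hpos
  have hfam : (fun (q : Fin n) (ω : Ω) =>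
      B ((q.succ : ℝ) * (a/2^i)) ω - B ((q.castSucc : ℝ) * (a/2^i)) ω)
      = fun (q : Fin n) => Ygrid B a i q.val := by
    funext q ω
    unfold Ygrid
    have h1 : ((q.succ : Fin (n+1)) : ℝ) = (q.val : ℝ) + 1 := by
      simp [Fin.val_succ]
    have h2 : ((q.castSucc : Fin (n+1)) : ℝ) = (q.val : ℝ) := by
      simp [Fin.coe_castSucc]
    rw [h1, h2]
  rw [hfam] at hI
  rw [iIndepFun_iff_measure_inter_preimage_eq_mul] at hI
  have h1 := hI (S.attachFin hmem) (sets := fun q => sets q.val)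
    (fun q hq => hsets q.val ((Finset.mem_attachFin hmem).mp hq))
  have hiInter : (⋂ p ∈ S, Ygrid B a i p ⁻¹' sets p)
      = ⋂ q ∈ S.attachFin hmem, Ygrid B a i q.val ⁻¹' sets q.val := by
    ext ω
    simp only [Set.mem_iInter, Finset.mem_attachFin]
    constructor
    · intro h q hq; exact h q.val hq
    · intro h p hp; exact h ⟨p, hmem p hp⟩ hp
  have hprod : (∏ p ∈ S, P (Ygrid B a i p ⁻¹' sets p))
      = ∏ q ∈ S.attachFin hmem, P (Ygrid B a i q.val ⁻¹' sets q.val) := by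
    refine (Finset.prod_bij' (fun q _ => q.val) (fun p hp => ⟨p, hmem p hp⟩) ?_ ?_ ?_ ?_ ?_).symm
    · intro q hq; exact (Finset.mem_attachFin hmem).mp hq
    · intro p hp; exact (Finset.mem_attachFin hmem).mpr hp
    · intro q hq; rfl
    · intro p hp; rfl
    · intro q hq; rfl
  rw [hiInter, hprod, h1]

lemma Ygrid_map (hB : IsStdBrownianMotion P B) (ha : 0 < a) (i p : ℕ) :
    P.map (Ygrid B a i p) = gaussianReal 0 (Real.toNNReal (a/2^i)) := by
  have hh : (0:ℝ) < a/2^i := by positivity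
  have h0 : (0:ℝ) ≤ (p:ℝ) * (a/2^i) := mul_nonneg (Nat.cast_nonneg _) hh.le
  have hle : (p:ℝ) * (a/2^i) ≤ ((p:ℝ)+1) * (a/2^i) := by nlinarith
  have := hB.gauss_incr ((p:ℝ)*(a/2^i)) (((p:ℝ)+1)*(a/2^i)) h0 hle
  rw [show ((p:ℝ)+1)*(a/2^i) - (p:ℝ)*(a/2^i) = a/2^i by ring] at this
  exact this

lemma vecB_map (hB : IsStdBrownianMotion P B) (ha : 0 < a) (i k : ℕ) :
    P.map (vecB B a i k)
      = Measure.pi (fun _ : Fin (2^i) => gaussianReal 0 (Real.toNNReal (a/2^i))) := by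
  symm
  apply Measure.pi_eq
  intro s hs
  rw [Measure.map_apply (vecB_meas hB.meas a i k) (MeasurableSet.univ_pi hs)]
  have hpre : vecB B a i k ⁻¹' (univ.pi s)
      = ⋂ l : Fin (2^i), Ygrid B a i (k*2^i + l.val) ⁻¹' s l := by
    ext ω; simp [vecB, Set.mem_pi]
  rw [hpre]
  have hind := Ygrid_indep hB ha i
  rw [iIndepFun_iff_measure_inter_preimage_eq_mul] at hind
  classical
  set sets : ℕ → Set ℝ := fun p =>
    if hp : p - k*2^i < 2^i ∧ k*2^i ≤ p then s ⟨p - k*2^i, hp.1⟩ else univ with hsetsdef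
  have hS := hind (Finset.image (fun l : Fin (2^i) => k*2^i + l.val) Finset.univ)
    (sets := sets) (fun p _ => by
      rw [hsetsdef]; dsimp only; split
      · exact hs _
      · exact MeasurableSet.univ)
  have hinj : Function.Injective (fun l : Fin (2^i) => k*2^i + l.val) := by
    intro x y hxy
    simp only at hxy
    exact Fin.val_injective (by omega)
  have hsets_eq : ∀ l : Fin (2^i), sets (k*2^i + l.val) = s l := by
    intro l
    rw [hsetsdef]
    have hcond : (k*2^i + l.val) - k*2^i < 2^i ∧ k*2^i ≤ k*2^i + l.val := by
      constructor <;> omega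
    dsimp only
    rw [dif_pos hcond]
    have heq : (⟨k*2^i + l.val - k*2^i, hcond.1⟩ : Fin (2^i)) = l :=
      Fin.val_injective (by simp)
    rw [heq]
  have hiInter2 : (⋂ p ∈ Finset.image (fun l : Fin (2^i) => k*2^i + l.val) Finset.univ,
      Ygrid B a i p ⁻¹' sets p) = ⋂ l : Fin (2^i), Ygrid B a i (k*2^i + l.val) ⁻¹' s l := by
    ext ω
    simp only [Set.mem_iInter, Finset.mem_image, Finset.mem_univ, true_and]
    constructor
    · intro h l; have := h (k*2^i + l.val) ⟨l, rfl⟩; rwa [hsets_eq l] at this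
    · rintro h p ⟨l, rfl⟩; rw [hsets_eq l]; exact h l
  rw [hiInter2] at hS
  rw [hS, Finset.prod_image (fun x _ y _ hxy => hinj hxy)]
  apply Finset.prod_congr rfl
  intro l _
  rw [hsets_eq l, ← Measure.map_apply (Ygrid_meas hB.meas a i _) (hs l), Ygrid_map hB ha]

lemma groupInd (hB : IsStdBrownianMotion P B) (ha : 0 < a) (i n : ℕ)
    (T : ℕ → Set (Fin (2^i) → ℝ)) (hT : ∀ k, MeasurableSet (T k)) :
    P (⋂ k ∈ Finset.range n, vecB B a i k ⁻¹' T k)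
      = ∏ k ∈ Finset.range n, P (vecB B a i k ⁻¹' T k) := by
  induction n with
  | zero => simp
  | succ n ih =>
    classical
    have hdis : Disjoint (Finset.Ico (n*2^i) (n*2^i + 2^i)) (Finset.range (n*2^i)) := by
      rw [Finset.disjoint_left]
      intro x hx hx'
      rw [Finset.mem_Ico] at hx
      rw [Finset.mem_range] at hx'
      omega
    have hIF := (Ygrid_indep hB ha i).indepFun_finset _ _ hdis (fun p => Ygrid_meas hB.meas a i p)
    rw [indepFun_iff_measure_inter_preimage_eq_mul] at hIF
    set ψS : ((Finset.Ico (n*2^i) (n*2^i + 2^i) : Finset ℕ) → ℝ) → (Fin (2^i) → ℝ) :=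
      fun v l => v ⟨n*2^i + l.val, by rw [Finset.mem_Ico]; omega⟩ with hψS
    set ψT : ((Finset.range (n*2^i) : Finset ℕ) → ℝ) → ℕ → (Fin (2^i) → ℝ) :=
      fun v k l => if h : k*2^i + l.val < n*2^i
        then v ⟨k*2^i + l.val, by rw [Finset.mem_range]; exact h⟩ else 0 with hψT
    have hψSm : Measurable ψS := measurable_pi_lambda _ fun l => measurable_pi_apply _
    have hψTm : ∀ k, Measurable (fun v => ψT v k) := by
      intro k
      apply measurable_pi_lambda
      intro l
      rw [hψT]; dsimp only
      split
      · exact measurable_pi_apply _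
      · exact measurable_const
    have hSeq : vecB B a i n ⁻¹' T n
        = (fun ω (q : (Finset.Ico (n*2^i) (n*2^i + 2^i) : Finset ℕ)) => Ygrid B a i q ω) ⁻¹' (ψS ⁻¹' T n) := by
      ext ω; simp only [Set.mem_preimage]
      have : ψS (fun q => Ygrid B a i q ω) = vecB B a i n ω := rfl
      rw [this]
    have hTeq : (⋂ k ∈ Finset.range n, vecB B a i k ⁻¹' T k)
        = (fun ω (q : (Finset.range (n*2^i) : Finset ℕ)) => Ygrid B a i q ω) ⁻¹'
          (⋂ k ∈ Finset.range n, (fun v => ψT v k) ⁻¹' T k) := by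
      ext ω
      simp only [Set.mem_preimage, Set.mem_iInter]
      have hky : ∀ k, k < n → ψT (fun q => Ygrid B a i q ω) k = vecB B a i k ω := by
        intro k hk
        funext l
        rw [hψT]; dsimp only
        have hlt : k*2^i + l.val < n*2^i := by
          have : l.val < 2^i := l.isLt
          calc k*2^i + l.val < k*2^i + 2^i := by omega
            _ = (k+1)*2^i := by ring
            _ ≤ n*2^i := Nat.mul_le_mul_right _ (by omega)
        rw [dif_pos hlt]
        rfl
      constructor
      · intro h k hk
        show ψT (fun q => Ygrid B a i q ω) k ∈ T k
        rw [hky k (Finset.mem_range.mp hk)]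
        exact h k hk
      · intro h k hk
        have h2 : ψT (fun q => Ygrid B a i q ω) k ∈ T k := h k hk
        rw [hky k (Finset.mem_range.mp hk)] at h2
        exact h2
    have hMS : MeasurableSet (ψS ⁻¹' T n) := hψSm (hT n)
    have hMT : MeasurableSet (⋂ k ∈ Finset.range n, (fun v => ψT v k) ⁻¹' T k) := by
      apply MeasurableSet.biInter (Finset.countable_toSet _)
      intro k _
      exact hψTm k (hT k)
    have key := hIF _ _ hMS hMT
    rw [Finset.range_add_one]
    rw [Finset.set_biInter_insert]
    rw [hSeq, hTeq, key, Finset.prod_insert Finset.notMem_range_self]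
    rw [← hSeq, ← hTeq, ih]


def Ahat (B : ℝ → Ω → ℝ) (μ c a : ℝ) (k : ℕ) : Set Ω :=
  ⋂ d : ℕ, ⋃ i : ℕ, Ev B μ c a k i d

def FF (B : ℝ → Ω → ℝ) (μ c a : ℝ) (k d : ℕ) : Set Ω :=
  ⋂ i : ℕ, (Ev B μ c a k i d)ᶜ

def Wn (B : ℝ → Ω → ℝ) (μ c a : ℝ) (n : ℕ) : Set Ω :=
  ⋂ k ∈ Finset.range n, (Ahat B μ c a k)ᶜ

def Zset (B : ℝ → Ω → ℝ) (μ c a : ℝ) : Set Ω := ⋂ n : ℕ, Wn B μ c a n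

section Meas
variable {B : ℝ → Ω → ℝ} {μ c a : ℝ}

lemma Ahat_meas (hm : ∀ t, Measurable (B t)) (k : ℕ) : MeasurableSet (Ahat B μ c a k) :=
  MeasurableSet.iInter fun _ => MeasurableSet.iUnion fun _ => Ev_meas hm μ c a k _ _

lemma FF_meas (hm : ∀ t, Measurable (B t)) (k d : ℕ) : MeasurableSet (FF B μ c a k d) :=
  MeasurableSet.iInter fun _ => (Ev_meas hm μ c a k _ _).compl

lemma Wn_meas (hm : ∀ t, Measurable (B t)) (n : ℕ) : MeasurableSet (Wn B μ c a n) :=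
  MeasurableSet.biInter (Finset.countable_toSet _) fun _ _ => (Ahat_meas hm _).compl

lemma Zset_meas (hm : ∀ t, Measurable (B t)) : MeasurableSet (Zset B μ c a) :=
  MeasurableSet.iInter fun _ => Wn_meas hm _

lemma compl_Ahat (k : ℕ) : (Ahat B μ c a k)ᶜ = ⋃ d : ℕ, FF B μ c a k d := by
  rw [Ahat]
  rw [Set.compl_iInter]
  apply Set.iUnion_congr
  intro d
  rw [Set.compl_iUnion]
  rfl

lemma FF_mono (ha : 0 < a) (k : ℕ) : Monotone (FF B μ c a k) := by
  apply monotone_nat_of_le_succ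
  intro d
  apply Set.iInter_mono
  intro i
  exact Set.compl_subset_compl.mpr (Ev_anti_d ha k i d)

lemma Wn_anti : Antitone (Wn B μ c a) := by
  intro n m hnm ω hω
  rw [Wn, Set.mem_iInter₂] at hω ⊢
  intro k hk
  exact hω k (Finset.mem_range.mpr (lt_of_lt_of_le (Finset.mem_range.mp hk) hnm))
end Meas

variable {P : Measure Ω} [IsProbabilityMeasure P] {B : ℝ → Ω → ℝ} {μ c a : ℝ}

lemma Ev_prob_eq (hB : IsStdBrownianMotion P B) (ha : 0 < a) (k i d : ℕ) :
    P (Ev B μ c a k i d) = P (Ev B μ c a 0 i d) := by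
  have h1 : ∀ k' : ℕ, P (Ev B μ c a k' i d)
      = Measure.pi (fun _ : Fin (2^i) => gaussianReal 0 (Real.toNNReal (a/2^i)))
        (Sset μ c a i d) := by
    intro k'
    rw [Ev, ← Measure.map_apply (vecB_meas hB.meas a i k') (Sset_meas μ c a i d),
      vecB_map hB ha]
  rw [h1 k, h1 0]

lemma prod_compl_Ev (hB : IsStdBrownianMotion P B) (ha : 0 < a) (i d n : ℕ) :
    P (⋂ k ∈ Finset.range n, (Ev B μ c a k i d)ᶜ)
      = (1 - P (Ev B μ c a 0 i d))^n := by
  have hpre : ∀ k : ℕ, (Ev B μ c a k i d)ᶜ = vecB B a i k ⁻¹' (Sset μ c a i d)ᶜ := by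
    intro k; simp [Ev, Set.preimage_compl]
  calc P (⋂ k ∈ Finset.range n, (Ev B μ c a k i d)ᶜ)
      = P (⋂ k ∈ Finset.range n, vecB B a i k ⁻¹' (Sset μ c a i d)ᶜ) := rfl
    _ = ∏ k ∈ Finset.range n, P (vecB B a i k ⁻¹' (Sset μ c a i d)ᶜ) :=
        groupInd hB ha i n _ (fun _ => (Sset_meas μ c a i d).compl)
    _ = ∏ k ∈ Finset.range n, (1 - P (Ev B μ c a 0 i d)) := by
        apply Finset.prod_congr rfl
        intro k _
        rw [← hpre k, prob_compl_eq_one_sub (Ev_meas hB.meas μ c a k i d), Ev_prob_eq hB ha]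
    _ = (1 - P (Ev B μ c a 0 i d))^n := by
        rw [Finset.prod_const, Finset.card_range]

lemma Wn_le (hB : IsStdBrownianMotion P B) (ha : 0 < a) (n : ℕ) :
    P (Wn B μ c a n) ≤ (1 - P (Ahat B μ c a 0))^n := by
  classical
  -- Step a: Wn n ⊆ ⋃ d, ⋂ k ∈ range n, FF k d
  have hsub : Wn B μ c a n ⊆ ⋃ d : ℕ, ⋂ k ∈ Finset.range n, FF B μ c a k d := by
    intro ω hω
    rw [Wn, Set.mem_iInter₂] at hω
    have h1 : ∀ k, k < n → ∃ d, ω ∈ FF B μ c a k d := by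
      intro k hk
      have := hω k (Finset.mem_range.mpr hk)
      rw [compl_Ahat, Set.mem_iUnion] at this
      exact this
    choose g hg using h1
    set D := (Finset.range n).sup (fun k => if h : k < n then g k h else 0) with hD
    rw [Set.mem_iUnion]
    refine ⟨D, ?_⟩
    rw [Set.mem_iInter₂]
    intro k hk
    have hkn := Finset.mem_range.mp hk
    have hle : g k hkn ≤ D := by
      have := Finset.le_sup (f := fun k => if h : k < n then g k h else 0) hk
      rwa [dif_pos hkn] at this
    exact FF_mono ha k hle (hg k hkn)
  have hdir : Monotone (fun d => ⋂ k ∈ Finset.range n, FF B μ c a k d) := by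
    intro d d' hdd'
    exact Set.iInter₂_mono fun k _ => FF_mono ha k hdd'
  calc P (Wn B μ c a n) ≤ P (⋃ d : ℕ, ⋂ k ∈ Finset.range n, FF B μ c a k d) :=
        measure_mono hsub
    _ = ⨆ d : ℕ, P (⋂ k ∈ Finset.range n, FF B μ c a k d) :=
        Directed.measure_iUnion hdir.directed_le
    _ ≤ (1 - P (Ahat B μ c a 0))^n := by
        apply iSup_le
        intro d
        -- swap intersections
        have hswap : (⋂ k ∈ Finset.range n, FF B μ c a k d)
            = ⋂ i : ℕ, ⋂ k ∈ Finset.range n, (Ev B μ c a k i d)ᶜ := by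
          ext ω
          simp only [FF, Set.mem_iInter]
          exact ⟨fun h i k hk => h k hk i, fun h k hk i => h i k hk⟩
        rw [hswap]
        have hanti : Antitone (fun i => ⋂ k ∈ Finset.range n, (Ev B μ c a k i d)ᶜ) := by
          apply antitone_nat_of_succ_le
          intro i
          exact Set.iInter₂_mono fun k _ => Set.compl_subset_compl.mpr (Ev_mono_i ha k i d)
        have htend1 : Filter.Tendsto (fun i => P (⋂ k ∈ Finset.range n, (Ev B μ c a k i d)ᶜ))
            Filter.atTop (𝓝 (P (⋂ i : ℕ, ⋂ k ∈ Finset.range n, (Ev B μ c a k i d)ᶜ))) := by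
          apply tendsto_measure_iInter_atTop
          · intro i
            exact (MeasurableSet.biInter (Finset.countable_toSet _)
              fun k _ => (Ev_meas hB.meas μ c a k i d).compl).nullMeasurableSet
          · exact hanti
          · exact ⟨0, measure_ne_top P _⟩
        have hanti0 : Antitone (fun i => (Ev B μ c a 0 i d)ᶜ) := by
          apply antitone_nat_of_succ_le
          intro i
          exact Set.compl_subset_compl.mpr (Ev_mono_i ha 0 i d)
        have htend2 : Filter.Tendsto (fun i => P ((Ev B μ c a 0 i d)ᶜ))
            Filter.atTop (𝓝 (P (FF B μ c a 0 d))) := by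
          apply tendsto_measure_iInter_atTop
          · exact fun i => (Ev_meas hB.meas μ c a 0 i d).compl.nullMeasurableSet
          · exact hanti0
          · exact ⟨0, measure_ne_top P _⟩
        have htend2' : Filter.Tendsto (fun i => (P ((Ev B μ c a 0 i d)ᶜ))^n)
            Filter.atTop (𝓝 ((P (FF B μ c a 0 d))^n)) := ENNReal.Tendsto.pow htend2
        have heq : (fun i => P (⋂ k ∈ Finset.range n, (Ev B μ c a k i d)ᶜ))
            = fun i => (P ((Ev B μ c a 0 i d)ᶜ))^n := by
          funext i
          rw [prod_compl_Ev hB ha i d n, prob_compl_eq_one_sub (Ev_meas hB.meas μ c a 0 i d)]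
        rw [heq] at htend1
        have hlim : P (⋂ i : ℕ, ⋂ k ∈ Finset.range n, (Ev B μ c a k i d)ᶜ)
            = (P (FF B μ c a 0 d))^n := tendsto_nhds_unique htend1 htend2'
        rw [hlim]
        have hFsub : FF B μ c a 0 d ⊆ (Ahat B μ c a 0)ᶜ := by
          rw [compl_Ahat]
          exact Set.subset_iUnion (fun d => FF B μ c a 0 d) d
        calc (P (FF B μ c a 0 d))^n ≤ (P ((Ahat B μ c a 0)ᶜ))^n := by
              gcongr
              all_goals try exact measure_mono hFsub
          _ = (1 - P (Ahat B μ c a 0))^n := by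
              rw [prob_compl_eq_one_sub (Ahat_meas hB.meas 0)]

def badSet (P : Measure Ω) (B : ℝ → Ω → ℝ) (μ : ℝ) : Set Ω :=
  toMeasurable P {ω | ¬ Continuous fun t => B t ω + μ * t}

lemma Tc_eq_sInf (f : ℝ → ℝ) (c : ℝ) : Tc f c = sInf (dset f c) := rfl

lemma detect (ha : 0 < a) {ω : Ω} (hg : Continuous (fun t => B t ω + μ * t)) {k : ℕ}
    (hA : ω ∈ Ahat B μ c a k) :
    ∃ u ∈ dset (fun t => B t ω + μ * t) c, u ≤ ((k:ℝ)+1) * a := by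
  have hH : ∀ d : ℕ, ∃ x y, x ∈ Icc ((k:ℝ)*a) ((k:ℝ)*a + a) ∧ y ∈ Icc ((k:ℝ)*a) ((k:ℝ)*a+a)
      ∧ x ≤ y ∧ c - 1/((d:ℝ)+1) ≤ (fun t => B t ω + μ * t) x - (fun t => B t ω + μ * t) y := by
    intro d
    have h1 := Set.mem_iInter.mp hA d
    rw [Set.mem_iUnion] at h1
    obtain ⟨i, hEv⟩ := h1
    rw [mem_Ev ha] at hEv
    obtain ⟨l, l', hll', hl'J, hval⟩ := hEv
    have h2 : (0:ℝ) < 2^i := by positivity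
    have hcast : (l:ℝ) ≤ (l':ℝ) := by exact_mod_cast hll'
    have hcast2 : (l':ℝ) ≤ (2:ℝ)^i := by exact_mod_cast hl'J
    have hl'a : (l':ℝ)*(a/2^i) ≤ a := by
      calc (l':ℝ)*(a/2^i) ≤ (2:ℝ)^i * (a/2^i) := by
            apply mul_le_mul_of_nonneg_right hcast2 (by positivity)
        _ = a := by field_simp
    have hla : (l:ℝ)*(a/2^i) ≤ a :=
      le_trans (mul_le_mul_of_nonneg_right hcast (by positivity)) hl'a
    have hl0 : (0:ℝ) ≤ (l:ℝ)*(a/2^i) := by positivity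
    have hl'0 : (0:ℝ) ≤ (l':ℝ)*(a/2^i) := by positivity
    refine ⟨(k:ℝ)*a + l*(a/2^i), (k:ℝ)*a + l'*(a/2^i),
      ⟨by linarith, by linarith⟩, ⟨by linarith, by linarith⟩,
      by have := mul_le_mul_of_nonneg_right hcast (le_of_lt (by positivity : (0:ℝ) < a/2^i)); linarith, ?_⟩
    exact hval
  obtain ⟨x, y, hx, hy, hxy, hval⟩ := exists_pair_of_forall hg
    (by nlinarith : (k:ℝ)*a ≤ (k:ℝ)*a + a) hH
  have h0x : 0 ≤ x := le_trans (by positivity : (0:ℝ) ≤ (k:ℝ)*a) hx.1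
  exact ⟨y, mem_dset_of_pair hg h0x hxy hval, by have := hy.2; linarith⟩

lemma cover (ha : 0 < a) {ω : Ω} (hg : Continuous (fun t => B t ω + μ * t))
    (hpair : ∃ s u, 0 ≤ s ∧ s ≤ u ∧ u ≤ a ∧
      c ≤ (fun t => B t ω + μ * t) s - (fun t => B t ω + μ * t) u) :
    ω ∈ Ahat B μ c a 0 := by
  obtain ⟨s, u, hs0, hsu, hua, hval⟩ := hpair
  rw [Ahat]
  rw [Set.mem_iInter]
  intro d
  rw [Set.mem_iUnion]
  have hgrid := grid_of_pair (c := c) hg ha 0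
    (show ((0:ℕ):ℝ)*a ≤ s by push_cast; linarith)
    hsu (show u ≤ ((0:ℕ):ℝ)*a + a by push_cast; linarith) hval d
  obtain ⟨i, l, l', h1, h2, h3⟩ := hgrid
  exact ⟨i, (mem_Ev ha).mpr ⟨l, l', h1, h2, h3⟩⟩

lemma not_bad (hω : ω ∉ badSet P B μ) : Continuous (fun t => B t ω + μ * t) := by
  by_contra h
  exact hω (subset_toMeasurable P _ h)

lemma tail_bound (ha : 0 < a) {ω : Ω} (n : ℕ)
    (hω : ω ∉ badSet P B μ ∪ Wn B μ c a n) :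
    Tc (fun t => B t ω + μ * t) c ≤ n*a := by
  have hg : Continuous (fun t => B t ω + μ * t) := not_bad (fun h => hω (Or.inl h))
  have hW : ω ∉ Wn B μ c a n := fun h => hω (Or.inr h)
  rw [Wn, Set.mem_iInter₂] at hW
  push_neg at hW
  obtain ⟨k, hk, hA⟩ := hW
  rw [Set.notMem_compl_iff] at hA
  obtain ⟨u, hu, hub⟩ := detect ha hg hA
  rw [Tc_eq_sInf]
  have hkn : (k:ℝ)+1 ≤ (n:ℝ) := by
    have := Finset.mem_range.mp hk
    exact_mod_cast this
  calc sInf (dset (fun t => B t ω + μ * t) c) ≤ u := csInf_le dset_bddBelow hu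
    _ ≤ ((k:ℝ)+1)*a := hub
    _ ≤ n*a := by nlinarith

lemma cover2 (ha : 0 < a) :
    {ω : Ω | Tc (fun t => B t ω + μ * t) c < a}
      ⊆ badSet P B μ ∪ Zset B μ c a ∪ Ahat B μ c a 0 := by
  intro ω hω
  by_cases hb : ω ∈ badSet P B μ
  · exact Or.inl (Or.inl hb)
  by_cases hz : ω ∈ Zset B μ c a
  · exact Or.inl (Or.inr hz)
  right
  have hg : Continuous (fun t => B t ω + μ * t) := not_bad hb
  rw [Zset, Set.mem_iInter] at hz
  push_neg at hz
  obtain ⟨n, hn⟩ := hz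
  rw [Wn, Set.mem_iInter₂] at hn
  push_neg at hn
  obtain ⟨k, hk, hA⟩ := hn
  rw [Set.notMem_compl_iff] at hA
  obtain ⟨u0, hu0, _⟩ := detect ha hg hA
  have hlt : sInf (dset (fun t => B t ω + μ * t) c) < a := hω
  obtain ⟨t, htmem, hta⟩ := (csInf_lt_iff dset_bddBelow ⟨u0, hu0⟩).mp hlt
  obtain ⟨s, hs0, hst, hval⟩ := pair_of_mem_dset hg htmem
  exact cover ha hg ⟨s, t, hs0, hst, hta.le, hval⟩

lemma gauss_Iic_pos {v : NNReal} (hv : v ≠ 0) (x : ℝ) :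
    0 < gaussianReal 0 v (Iic x) := by
  rw [gaussianReal_apply 0 hv]
  have hsupp : Function.support (gaussianPDF 0 v) = Set.univ := by
    ext y
    simp only [Function.mem_support, Set.mem_univ, iff_true]
    exact (gaussianPDF_pos 0 hv y).ne'
  rw [lintegral_pos_iff_support (measurable_gaussianPDF 0 v), hsupp,
    Measure.restrict_apply_univ, Real.volume_Iic]
  exact ENNReal.zero_lt_top

lemma badSet_null (hB : IsStdBrownianMotion P B) : P (badSet P B μ) = 0 := by
  rw [badSet, measure_toMeasurable]
  have h1 : {ω | ¬ Continuous fun t => B t ω + μ * t}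
      ⊆ {ω | ¬ Continuous fun t => B t ω} := by
    intro ω h hcont
    exact h (hcont.add (continuous_const.mul continuous_id))
  apply measure_mono_null h1
  exact hB.cont

lemma Ahat_pos (hB : IsStdBrownianMotion P B) (hc : 0 < c) (ha : 0 < a) :
    0 < P (Ahat B μ c a 0) := by
  set A1 : Set Ω := (fun ω => B a ω - B 0 ω) ⁻¹' (Iic (-c - μ*a)) with hA1
  have hsub : A1 ⊆ Ahat B μ c a 0 ∪ badSet P B μ := by
    intro ω hω
    by_cases hb : ω ∈ badSet P B μ
    · exact Or.inr hb
    left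
    have hg : Continuous (fun t => B t ω + μ * t) := not_bad hb
    apply cover ha hg
    refine ⟨0, a, le_refl _, ha.le, le_refl _, ?_⟩
    have hω' : B a ω - B 0 ω ≤ -c - μ*a := hω
    simp only
    linarith
  have hApos : 0 < P A1 := by
    have hmeas : Measurable (fun ω => B a ω - B 0 ω) := (hB.meas a).sub (hB.meas 0)
    have hmap := hB.gauss_incr 0 a (le_refl 0) ha.le
    have : P A1 = (P.map (fun ω => B a ω - B 0 ω)) (Iic (-c - μ*a)) := by
      rw [Measure.map_apply hmeas measurableSet_Iic]
    rw [this, hmap]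
    apply gauss_Iic_pos
    simp only [ne_eq, Real.toNNReal_eq_zero, not_le]
    linarith
  calc 0 < P A1 := hApos
    _ ≤ P (Ahat B μ c a 0) + P (badSet P B μ) := le_trans (measure_mono hsub) (measure_union_le _ _)
    _ = P (Ahat B μ c a 0) := by rw [badSet_null hB, add_zero]

lemma Zset_null (hB : IsStdBrownianMotion P B) (hc : 0 < c) (ha : 0 < a) :
    P (Zset B μ c a) = 0 := by
  have hr := Ahat_pos hB hc ha (μ := μ)
  have hlt : 1 - P (Ahat B μ c a 0) < 1 :=
    ENNReal.sub_lt_self ENNReal.one_ne_top one_ne_zero hr.ne'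
  have htend : Tendsto (fun n => (1 - P (Ahat B μ c a 0))^n) atTop (𝓝 0) :=
    ENNReal.tendsto_pow_atTop_nhds_zero_of_lt_one hlt
  have hle : ∀ n, P (Zset B μ c a) ≤ (1 - P (Ahat B μ c a 0))^n := by
    intro n
    exact le_trans (measure_mono (Set.iInter_subset _ n)) (Wn_le hB ha n)
  have := ge_of_tendsto htend (Filter.Eventually.of_forall hle)
  exact le_antisymm this zero_le

lemma lintegral_bound (hB : IsStdBrownianMotion P B) (ha : 0 < a) :
    ∫⁻ ω, ENNReal.ofReal (Tc (fun t => B t ω + μ * t) c) ∂P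
      ≤ ENNReal.ofReal a * (P (Ahat B μ c a 0))⁻¹ := by
  classical
  set r := P (Ahat B μ c a 0) with hrdef
  set C : ℕ → Set Ω := fun n => badSet P B μ ∪ Wn B μ c a n with hC
  have hCmeas : ∀ n, MeasurableSet (C n) :=
    fun n => (measurableSet_toMeasurable _ _).union (Wn_meas hB.meas n)
  have hCbound : ∀ n, P (C n) ≤ (1 - r)^n := by
    intro n
    calc P (C n) ≤ P (badSet P B μ) + P (Wn B μ c a n) := measure_union_le _ _
      _ = P (Wn B μ c a n) := by rw [badSet_null hB, zero_add]
      _ ≤ (1-r)^n := Wn_le hB ha n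
  have hpoint : ∀ ω, ENNReal.ofReal (Tc (fun t => B t ω + μ * t) c)
      ≤ ENNReal.ofReal a * ∑' n : ℕ, (C n).indicator (1 : Ω → ENNReal) ω := by
    intro ω
    by_cases hall : ∀ n, ω ∈ C n
    · have htop : ∑' n : ℕ, (C n).indicator (1 : Ω → ENNReal) ω = ⊤ := by
        have h1 : ∀ n : ℕ, (C n).indicator (1 : Ω → ENNReal) ω = 1 :=
          fun n => by rw [Set.indicator_of_mem (hall n)]; rfl
        rw [tsum_congr h1]
        exact ENNReal.tsum_const_eq_top_of_ne_zero one_ne_zero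
      rw [htop, ENNReal.mul_top (by simp only [ne_eq, ENNReal.ofReal_eq_zero, not_le]; linarith)]
      exact le_top
    · push_neg at hall
      have hKnot : ω ∉ C (Nat.find hall) := Nat.find_spec hall
      have hKmin : ∀ m, m < Nat.find hall → ω ∈ C m :=
        fun m hm => not_not.mp (Nat.find_min hall hm)
      have hXK : Tc (fun t => B t ω + μ * t) c ≤ (Nat.find hall)*a := tail_bound ha _ hKnot
      have hsum : ((Nat.find hall : ℕ) : ENNReal)
          ≤ ∑' n : ℕ, (C n).indicator (1 : Ω → ENNReal) ω := by
        have h1 : ∀ n ∈ Finset.range (Nat.find hall),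
            (C n).indicator (1 : Ω → ENNReal) ω = 1 :=
          fun n hn => by rw [Set.indicator_of_mem (hKmin n (Finset.mem_range.mp hn))]; rfl
        calc ((Nat.find hall : ℕ) : ENNReal)
            = ∑ n ∈ Finset.range (Nat.find hall), (C n).indicator (1 : Ω → ENNReal) ω := by
              rw [Finset.sum_congr rfl h1]; simp
          _ ≤ _ := ENNReal.sum_le_tsum _
      calc ENNReal.ofReal (Tc (fun t => B t ω + μ * t) c)
          ≤ ENNReal.ofReal ((Nat.find hall : ℕ)*a) := ENNReal.ofReal_le_ofReal hXK
        _ = ENNReal.ofReal a * ((Nat.find hall : ℕ) : ENNReal) := by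
            rw [mul_comm ((Nat.find hall : ℕ):ℝ) a, ENNReal.ofReal_mul ha.le,
              ENNReal.ofReal_natCast]
        _ ≤ ENNReal.ofReal a * ∑' n : ℕ, (C n).indicator (1 : Ω → ENNReal) ω :=
            mul_le_mul_right hsum _
  calc ∫⁻ ω, ENNReal.ofReal (Tc (fun t => B t ω + μ * t) c) ∂P
      ≤ ∫⁻ ω, ENNReal.ofReal a * ∑' n : ℕ, (C n).indicator (1 : Ω → ENNReal) ω ∂P :=
        lintegral_mono hpoint
    _ = ENNReal.ofReal a * ∫⁻ ω, ∑' n : ℕ, (C n).indicator (1 : Ω → ENNReal) ω ∂P :=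
        lintegral_const_mul' _ _ ENNReal.ofReal_ne_top
    _ = ENNReal.ofReal a * ∑' n : ℕ, P (C n) := by
        congr 1
        rw [lintegral_tsum (fun n => ((measurable_one.indicator (hCmeas n)).aemeasurable))]
        apply tsum_congr; intro n
        exact lintegral_indicator_one (hCmeas n)
    _ ≤ ENNReal.ofReal a * ∑' n : ℕ, (1-r)^n := by
        apply mul_le_mul_right
        exact ENNReal.tsum_le_tsum hCbound
    _ = ENNReal.ofReal a * (1 - (1-r))⁻¹ := by rw [ENNReal.tsum_geometric]
    _ = ENNReal.ofReal a * r⁻¹ := by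
        rw [ENNReal.sub_sub_cancel ENNReal.one_ne_top prob_le_one]

end
end DDP

open DDP in
/-- For every `μ` and `c > 0`, the first drawdown time satisfies
`P(T_c < (1/3) E T_c) ≤ 7/9`; equivalently `P(T_c ≥ (1/3) E T_c) ≥ 2/9`. -/
theorem Tc_small_probability_bound {Ω : Type*} [MeasurableSpace Ω] (P : Measure Ω)
    [IsProbabilityMeasure P] (B : ℝ → Ω → ℝ) (hB : IsStdBrownianMotion P B)
    (μ c : ℝ) (hc : 0 < c) :
    P {ω | Tc (fun t => B t ω + μ * t) c
        < 1 / 3 * ∫ ω', Tc (fun t => B t ω' + μ * t) c ∂P} ≤ 7 / 9 ∧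
    2 / 9 ≤ P {ω | 1 / 3 * (∫ ω', Tc (fun t => B t ω' + μ * t) c ∂P)
        ≤ Tc (fun t => B t ω + μ * t) c} := by
  classical
  have hX0 : ∀ ω : Ω, 0 ≤ Tc (fun t => B t ω + μ * t) c :=
    fun ω => Real.sInf_nonneg (fun x hx => hx.1)
  set m := ∫ ω', Tc (fun t => B t ω' + μ * t) c ∂P with hm
  have h29le1 : (2:ENNReal)/9 ≤ 1 := by
    rw [ENNReal.div_le_iff (by norm_num) (by norm_num)]
    norm_num
  have h79 : ENNReal.ofReal (1/3 : ℝ) ≤ 7/9 := by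
    have h1 : ENNReal.ofReal (1/3 : ℝ) ≤ ENNReal.ofReal (7/9 : ℝ) :=
      ENNReal.ofReal_le_ofReal (by norm_num)
    have h2 : ENNReal.ofReal ((7:ℝ)/9) = (7:ENNReal)/9 := by
      rw [ENNReal.ofReal_div_of_pos (by norm_num : (0:ℝ) < 9)]
      norm_num
    rwa [h2] at h1
  rcases le_or_gt m 0 with hm0 | hm0
  · constructor
    · have hempty : {ω : Ω | Tc (fun t => B t ω + μ * t) c < 1/3 * m} = ∅ := by
        ext ω
        simp only [Set.mem_setOf_eq, Set.mem_empty_iff_false, iff_false, not_lt]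
        have := hX0 ω
        linarith
      rw [hempty, measure_empty]
      exact zero_le
    · have huniv : {ω : Ω | 1/3 * m ≤ Tc (fun t => B t ω + μ * t) c} = Set.univ := by
        ext ω
        simp only [Set.mem_setOf_eq, Set.mem_univ, iff_true]
        have := hX0 ω
        linarith
      rw [huniv, measure_univ]
      exact h29le1
  · have hInt : Integrable (fun ω => Tc (fun t => B t ω + μ * t) c) P := by
      by_contra h
      rw [hm, integral_undef h] at hm0
      exact lt_irrefl 0 hm0
    have ha : 0 < 1/3 * m := by linarith
    set a := 1/3 * m with hadef
    have hr : 0 < P (Ahat B μ c a 0) := Ahat_pos hB hc ha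
    have hrne : P (Ahat B μ c a 0) ≠ 0 := hr.ne'
    have hrne2 : P (Ahat B μ c a 0) ≠ ⊤ := measure_ne_top P _
    have hlin := lintegral_bound (μ := μ) (c := c) hB ha
    have hfin : ∫⁻ ω, ENNReal.ofReal (Tc (fun t => B t ω + μ * t) c) ∂P ≠ ⊤ :=
      ne_top_of_le_ne_top (ENNReal.mul_ne_top ENNReal.ofReal_ne_top
        (ENNReal.inv_ne_top.mpr hrne)) hlin
    have hmeq : ENNReal.ofReal m = ∫⁻ ω, ENNReal.ofReal (Tc (fun t => B t ω + μ * t) c) ∂P := by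
      rw [hm, integral_eq_lintegral_of_nonneg_ae (Filter.Eventually.of_forall hX0)
        hInt.aestronglyMeasurable]
      exact ENNReal.ofReal_toReal hfin
    have hkey : P (Ahat B μ c a 0) ≤ ENNReal.ofReal (1/3 : ℝ) := by
      have h1 : ENNReal.ofReal m * P (Ahat B μ c a 0) ≤ ENNReal.ofReal a := by
        calc ENNReal.ofReal m * P (Ahat B μ c a 0)
            ≤ (ENNReal.ofReal a * (P (Ahat B μ c a 0))⁻¹) * P (Ahat B μ c a 0) :=
              mul_le_mul_left (hmeq ▸ hlin) _
          _ = ENNReal.ofReal a * ((P (Ahat B μ c a 0))⁻¹ * P (Ahat B μ c a 0)) := mul_assoc _ _ _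
          _ = ENNReal.ofReal a := by rw [ENNReal.inv_mul_cancel hrne hrne2, mul_one]
      have h2 : P (Ahat B μ c a 0) ≤ ENNReal.ofReal a / ENNReal.ofReal m := by
        rw [ENNReal.le_div_iff_mul_le (Or.inl (ENNReal.ofReal_pos.mpr hm0).ne')
          (Or.inl ENNReal.ofReal_ne_top), mul_comm]
        exact h1
      have h3 : ENNReal.ofReal a / ENNReal.ofReal m = ENNReal.ofReal (a/m) :=
        (ENNReal.ofReal_div_of_pos hm0).symm
      have h4 : a/m = 1/3 := by rw [hadef, mul_div_assoc, div_self hm0.ne', mul_one]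
      rwa [h3, h4] at h2
  -- covering set
    have hVmeas : MeasurableSet (badSet P B μ ∪ Zset B μ c a ∪ Ahat B μ c a 0) :=
      ((measurableSet_toMeasurable _ _).union (Zset_meas hB.meas)).union (Ahat_meas hB.meas 0)
    have hVb : P (badSet P B μ ∪ Zset B μ c a ∪ Ahat B μ c a 0) ≤ ENNReal.ofReal (1/3 : ℝ) := by
      calc P (badSet P B μ ∪ Zset B μ c a ∪ Ahat B μ c a 0)
          ≤ P (badSet P B μ ∪ Zset B μ c a) + P (Ahat B μ c a 0) := measure_union_le _ _
        _ ≤ (P (badSet P B μ) + P (Zset B μ c a)) + P (Ahat B μ c a 0) :=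
            add_le_add_left (measure_union_le _ _) _
        _ = P (Ahat B μ c a 0) := by
            rw [badSet_null hB, Zset_null hB hc ha, add_zero, zero_add]
        _ ≤ ENNReal.ofReal (1/3 : ℝ) := hkey
    have hcov := cover2 (P := P) (B := B) (μ := μ) (c := c) ha
    have goal1 : P {ω | Tc (fun t => B t ω + μ * t) c < 1/3 * m} ≤ 7/9 :=
      le_trans (le_trans (measure_mono hcov) hVb) h79
    constructor
    · exact goal1
    · have hsub2 : (badSet P B μ ∪ Zset B μ c a ∪ Ahat B μ c a 0)ᶜ
          ⊆ {ω : Ω | 1/3 * m ≤ Tc (fun t => B t ω + μ * t) c} := by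
        intro ω hω
        by_contra hlt
        have h5 : Tc (fun t => B t ω + μ * t) c < a := not_le.mp hlt
        exact hω (hcov h5)
      have hVb79 : P (badSet P B μ ∪ Zset B μ c a ∪ Ahat B μ c a 0) ≤ 7/9 :=
        le_trans hVb h79
      calc (2:ENNReal)/9 ≤ 1 - P (badSet P B μ ∪ Zset B μ c a ∪ Ahat B μ c a 0) := by
            apply ENNReal.le_sub_of_add_le_left (measure_ne_top P _)
            calc P (badSet P B μ ∪ Zset B μ c a ∪ Ahat B μ c a 0) + 2/9 ≤ 7/9 + 2/9 :=
                  add_le_add_left hVb79 _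
              _ = 9/9 := by rw [ENNReal.div_add_div_same]; norm_num
              _ = 1 := ENNReal.div_self (by norm_num) (by norm_num)
        _ = P ((badSet P B μ ∪ Zset B μ c a ∪ Ahat B μ c a 0)ᶜ) :=
            (prob_compl_eq_one_sub hVmeas).symm
        _ ≤ P {ω : Ω | 1/3 * m ≤ Tc (fun t => B t ω + μ * t) c} := measure_mono hsub2
end

section
/- Maximal trading gain under flat proportional commission: let P_t = exp(μ t + σ B_t) with σ > 0 be a geometric Brownian motion price process, let γ ∈ (0,1) be the commission ratio, and set c = ln((1 + γ)/(1 − γ)). Then, almost surely, sup_n sup_{0 ≤ t_1 < s_1 < ⋯ < t_n < s_n ≤ T} ∏_{i=1}^n ( (P_{s_i}/P_{t_i}) · (1 − γ)/(1 + γ) ) = exp( σ · UTV_{μ/σ}^{c/σ}[0,T] ). -/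
open MeasureTheory ProbabilityTheory Real Set

/-- Telescoping bound: the total length of disjoint ordered intervals in `[a,b]` is `≤ b-a`. -/
private lemma sum_gaps_le : ∀ (n : ℕ) (t s : Fin n → ℝ) (a b : ℝ), a ≤ b →
    (∀ i, a ≤ t i) → (∀ i, s i ≤ b) → (∀ i, t i < s i) →
    (∀ i j : Fin n, i < j → s i < t j) →
    ∑ i : Fin n, (s i - t i) ≤ b - a := by
  intro n
  induction n with
  | zero => intro t s a b hab _ _ _ _; simp; linarith
  | succ n ih =>
    intro t s a b hab ht hs hts hint
    rw [Fin.sum_univ_castSucc]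
    have h1 : ∑ i : Fin n, (s i.castSucc - t i.castSucc) ≤ t (Fin.last n) - a := by
      apply ih (fun i => t i.castSucc) (fun i => s i.castSucc) a (t (Fin.last n))
        (ht _) (fun i => ht _) (fun i => (hint _ _ (Fin.castSucc_lt_last i)).le)
        (fun i => hts _)
      intro i j hij
      exact hint _ _ (by exact Fin.castSucc_lt_castSucc_iff.mpr hij)
    have h2 := hs (Fin.last n)
    have h3 := ht (Fin.last n)
    linarith

open Classical in
/-- Dropping the non-profitable trades: the maxed sum is attained by a genuine strategy. -/
private lemma subseq_sum (f : ℝ → ℝ) (d T : ℝ) (n : ℕ) (t s : Fin n → ℝ)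
    (ht : ∀ i, 0 ≤ t i) (hs : ∀ i, s i ≤ T) (hts : ∀ i, t i < s i)
    (hint : ∀ i j : Fin n, i < j → s i < t j) :
    ∃ (m : ℕ) (t' s' : Fin m → ℝ), (∀ i, 0 ≤ t' i) ∧ (∀ i, s' i ≤ T) ∧
      (∀ i, t' i < s' i) ∧ (∀ i j : Fin m, i < j → s' i < t' j) ∧
      ∑ i : Fin m, (f (s' i) - f (t' i) - d) = ∑ i : Fin n, max (f (s i) - f (t i) - d) 0 := by
  set g : Fin n → ℝ := fun i => f (s i) - f (t i) - d with hg
  set A : Finset (Fin n) := Finset.univ.filter (fun i => 0 ≤ g i) with hA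
  set e := A.orderIsoOfFin rfl
  refine ⟨A.card, fun i => t (e i), fun i => s (e i), fun i => ht _, fun i => hs _,
    fun i => hts _, fun i j hij => hint _ _ ?_, ?_⟩
  · exact Subtype.coe_lt_coe.mpr (e.strictMono hij)
  · have h1 : ∑ i : Fin A.card, g (e i) = ∑ x : {x // x ∈ A}, g x :=
      Equiv.sum_comp e.toEquiv (fun x : {x // x ∈ A} => g x)
    have h2 : ∑ x : {x // x ∈ A}, g (x : Fin n) = ∑ x ∈ A, g x := A.sum_coe_sort g
    have h3 : ∑ x ∈ A, g x = ∑ i : Fin n, max (g i) 0 := by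
      rw [hA, Finset.sum_filter]
      refine Finset.sum_congr rfl fun i _ => ?_
      by_cases h : 0 ≤ g i
      · simp [h, max_eq_left h]
      · push_neg at h
        simp [not_le.mpr h, max_eq_right h.le]
    simpa [hg] using h1.trans (h2.trans h3)

private lemma key_lemma (f : ℝ → ℝ) (hf : Continuous f) (σ d T : ℝ)
    (hσ : 0 < σ) (hd : 0 < d) (hT : 0 < T) :
    sSup {x | ∃ (n : ℕ) (t s : Fin n → ℝ),
        (∀ i, 0 ≤ t i) ∧ (∀ i, s i ≤ T) ∧ (∀ i, t i < s i) ∧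
        (∀ i j : Fin n, i < j → s i < t j) ∧
        x = Real.exp (σ * ∑ i : Fin n, (f (s i) - f (t i) - d))}
      = Real.exp (σ * UTV f d 0 T) := by
  set A : Set ℝ := {x | ∃ (n : ℕ) (t s : Fin n → ℝ),
    (∀ i, 0 ≤ t i) ∧ (∀ i, s i ≤ T) ∧ (∀ i, t i < s i) ∧
    (∀ i j : Fin n, i < j → s i < t j) ∧
    x = ∑ i : Fin n, max (f (s i) - f (t i) - d) 0} with hAdef
  have hUTV : UTV f d 0 T = sSup A := rfl
  set SL : Set ℝ := {x | ∃ (n : ℕ) (t s : Fin n → ℝ),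
    (∀ i, 0 ≤ t i) ∧ (∀ i, s i ≤ T) ∧ (∀ i, t i < s i) ∧
    (∀ i j : Fin n, i < j → s i < t j) ∧
    x = Real.exp (σ * ∑ i : Fin n, (f (s i) - f (t i) - d))} with hSLdef
  -- trivial element
  have hA0 : (0 : ℝ) ∈ A :=
    ⟨0, Fin.elim0, Fin.elim0, fun i => i.elim0, fun i => i.elim0, fun i => i.elim0,
      fun i => i.elim0, by simp⟩
  have hSL1 : (1 : ℝ) ∈ SL :=
    ⟨0, Fin.elim0, Fin.elim0, fun i => i.elim0, fun i => i.elim0, fun i => i.elim0,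
      fun i => i.elim0, by simp⟩
  -- bound on |f| on [0,T]
  obtain ⟨M, hM⟩ := (isCompact_Icc (a := (0:ℝ)) (b := T)).exists_bound_of_continuousOn
    hf.continuousOn
  have hM0 : 0 ≤ M := le_trans (norm_nonneg _) (hM T ⟨hT.le, le_rfl⟩)
  have hMabs : ∀ x ∈ Icc (0:ℝ) T, |f x| ≤ M := by
    intro x hx; simpa [Real.norm_eq_abs] using hM x hx
  -- uniform continuity
  obtain ⟨δ, hδ0, hδ⟩ := Metric.uniformContinuousOn_iff.mp
    ((isCompact_Icc (a := (0:ℝ)) (b := T)).uniformContinuousOn_of_continuous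
      hf.continuousOn) d hd
  -- A bounded above
  have hbddA : BddAbove A := by
    refine ⟨2 * M / δ * T, ?_⟩
    rintro x ⟨n, t, s, ht, hs, hts, hint, rfl⟩
    have hmem : ∀ i, t i ∈ Icc (0:ℝ) T ∧ s i ∈ Icc (0:ℝ) T := by
      intro i
      exact ⟨⟨ht i, le_trans (hts i).le (hs i)⟩, ⟨le_trans (ht i) (hts i).le, hs i⟩⟩
    have hterm : ∀ i, max (f (s i) - f (t i) - d) 0 ≤ 2 * M / δ * (s i - t i) := by
      intro i
      rcases lt_or_ge (s i - t i) δ with h | h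
      · have hdist : dist (t i) (s i) < δ := by
          rw [Real.dist_eq, abs_sub_lt_iff]; constructor <;> linarith [hts i]
        have := hδ (t i) (hmem i).1 (s i) (hmem i).2 hdist
        rw [Real.dist_eq] at this
        have h2 : f (s i) - f (t i) < d := by
          rcases abs_sub_lt_iff.mp this with ⟨h3, h4⟩; linarith
        have : max (f (s i) - f (t i) - d) 0 = 0 := max_eq_right (by linarith)
        rw [this]
        exact mul_nonneg (by positivity) (sub_pos.mpr (hts i)).le
      · have hb1 : f (s i) - f (t i) - d ≤ 2 * M := by
          have := hMabs _ (hmem i).1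
          have := hMabs _ (hmem i).2
          have h1 := abs_le.mp (hMabs _ (hmem i).1)
          have h2 := abs_le.mp (hMabs _ (hmem i).2)
          linarith
        have hmx : max (f (s i) - f (t i) - d) 0 ≤ 2 * M :=
          max_le hb1 (by linarith)
        calc max (f (s i) - f (t i) - d) 0 ≤ 2 * M := hmx
          _ = 2 * M / δ * δ := by field_simp
          _ ≤ 2 * M / δ * (s i - t i) := by
              apply mul_le_mul_of_nonneg_left h; positivity
    calc ∑ i : Fin n, max (f (s i) - f (t i) - d) 0
        ≤ ∑ i : Fin n, 2 * M / δ * (s i - t i) := Finset.sum_le_sum fun i _ => hterm i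
      _ = 2 * M / δ * ∑ i : Fin n, (s i - t i) := by rw [Finset.mul_sum]
      _ ≤ 2 * M / δ * (T - 0) := by
          apply mul_le_mul_of_nonneg_left
            (sum_gaps_le n t s 0 T hT.le ht hs hts hint) (by positivity)
      _ = 2 * M / δ * T := by ring
  -- every element of SL is ≤ exp (σ * sSup A)
  have hub : ∀ x ∈ SL, x ≤ Real.exp (σ * sSup A) := by
    rintro x ⟨n, t, s, ht, hs, hts, hint, rfl⟩
    have h1 : ∑ i : Fin n, (f (s i) - f (t i) - d)
        ≤ ∑ i : Fin n, max (f (s i) - f (t i) - d) 0 :=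
      Finset.sum_le_sum fun i _ => le_max_left _ _
    have h2 : ∑ i : Fin n, max (f (s i) - f (t i) - d) 0 ≤ sSup A :=
      le_csSup hbddA ⟨n, t, s, ht, hs, hts, hint, rfl⟩
    exact Real.exp_le_exp.mpr (mul_le_mul_of_nonneg_left (h1.trans h2) hσ.le)
  have hbddSL : BddAbove SL := ⟨Real.exp (σ * sSup A), hub⟩
  rw [hUTV]
  apply le_antisymm (csSup_le ⟨1, hSL1⟩ hub)
  -- other direction
  have hmono : Monotone fun x : ℝ => Real.exp (σ * x) := fun a b h =>
    Real.exp_le_exp.mpr (mul_le_mul_of_nonneg_left h hσ.le)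
  have hcont : ContinuousAt (fun x : ℝ => Real.exp (σ * x)) (sSup A) :=
    (Real.continuous_exp.comp (continuous_const.mul continuous_id)).continuousAt
  rw [hmono.map_csSup_of_continuousAt hcont ⟨0, hA0⟩ hbddA]
  apply csSup_le (Set.Nonempty.image _ ⟨0, hA0⟩)
  rintro y ⟨x, ⟨n, t, s, ht, hs, hts, hint, rfl⟩, rfl⟩
  obtain ⟨m, t', s', ht', hs', hts', hint', hsum⟩ :=
    subseq_sum f d T n t s ht hs hts hint
  apply le_csSup hbddSL
  exact ⟨m, t', s', ht', hs', hts', hint', by rw [hsum]⟩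

/-- Maximal trading gain under flat proportional commission: with prices
`P_t = exp(μ t + σ B_t)`, `σ > 0`, commission ratio `γ ∈ (0,1)` and `c = log((1+γ)/(1-γ))`,
almost surely
`sup_n sup_{0 ≤ t₁ < s₁ < ⋯ < t_n < s_n ≤ T} ∏ (P_{s_i}/P_{t_i}) (1-γ)/(1+γ)
  = exp(σ · UTV_{μ/σ}^{c/σ}[0,T])`. -/
theorem maximal_trading_gain {Ω : Type*} [MeasurableSpace Ω] (P : Measure Ω)
    [IsProbabilityMeasure P] (B : ℝ → Ω → ℝ) (hB : IsStdBrownianMotion P B)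
    (μ σ γ T : ℝ) (hσ : 0 < σ) (hγ : γ ∈ Set.Ioo (0 : ℝ) 1) (hT : 0 < T) :
    ∀ᵐ ω ∂P,
      sSup {x | ∃ (n : ℕ) (t s : Fin n → ℝ),
          (∀ i, 0 ≤ t i) ∧ (∀ i, s i ≤ T) ∧ (∀ i, t i < s i) ∧
          (∀ i j : Fin n, i < j → s i < t j) ∧
          x = ∏ i : Fin n,
            Real.exp (μ * s i + σ * B (s i) ω) / Real.exp (μ * t i + σ * B (t i) ω)
              * ((1 - γ) / (1 + γ))}
        = Real.exp (σ * UTV (fun u => B u ω + μ / σ * u)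
            (Real.log ((1 + γ) / (1 - γ)) / σ) 0 T) := by
  filter_upwards [hB.cont] with ω hcont
  have hγ1 : 0 < γ := hγ.1
  have hγ2 : γ < 1 := hγ.2
  have hc : 0 < Real.log ((1 + γ) / (1 - γ)) :=
    Real.log_pos ((one_lt_div (by linarith)).mpr (by linarith))
  have hd : 0 < Real.log ((1 + γ) / (1 - γ)) / σ := div_pos hc hσ
  have hf : Continuous fun u => B u ω + μ / σ * u :=
    hcont.add (continuous_const.mul continuous_id)
  have hr : (0:ℝ) < (1 + γ) / (1 - γ) := div_pos (by linarith) (by linarith)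
  have prodeq : ∀ (n : ℕ) (t s : Fin n → ℝ),
      (∏ i : Fin n, Real.exp (μ * s i + σ * B (s i) ω) / Real.exp (μ * t i + σ * B (t i) ω)
        * ((1 - γ) / (1 + γ)))
      = Real.exp (σ * ∑ i : Fin n,
          ((fun u => B u ω + μ / σ * u) (s i) - (fun u => B u ω + μ / σ * u) (t i)
            - Real.log ((1 + γ) / (1 - γ)) / σ)) := by
    intro n t s
    rw [Finset.mul_sum, Real.exp_sum]
    refine Finset.prod_congr rfl fun i _ => ?_
    have h1 : (1 - γ) / (1 + γ) = Real.exp (-Real.log ((1 + γ) / (1 - γ))) := by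
      rw [Real.exp_neg, Real.exp_log hr, inv_div]
    rw [h1, ← Real.exp_sub, ← Real.exp_add]
    congr 1
    have hσ' : σ ≠ 0 := hσ.ne'
    field_simp
    ring
  have hset : {x | ∃ (n : ℕ) (t s : Fin n → ℝ),
      (∀ i, 0 ≤ t i) ∧ (∀ i, s i ≤ T) ∧ (∀ i, t i < s i) ∧
      (∀ i j : Fin n, i < j → s i < t j) ∧
      x = ∏ i : Fin n,
        Real.exp (μ * s i + σ * B (s i) ω) / Real.exp (μ * t i + σ * B (t i) ω)
          * ((1 - γ) / (1 + γ))}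
      = {x | ∃ (n : ℕ) (t s : Fin n → ℝ),
      (∀ i, 0 ≤ t i) ∧ (∀ i, s i ≤ T) ∧ (∀ i, t i < s i) ∧
      (∀ i j : Fin n, i < j → s i < t j) ∧
      x = Real.exp (σ * ∑ i : Fin n,
          ((fun u => B u ω + μ / σ * u) (s i) - (fun u => B u ω + μ / σ * u) (t i)
            - Real.log ((1 + γ) / (1 - γ)) / σ))} := by
    ext x
    constructor
    · rintro ⟨n, t, s, h1, h2, h3, h4, rfl⟩
      exact ⟨n, t, s, h1, h2, h3, h4, prodeq n t s⟩
    · rintro ⟨n, t, s, h1, h2, h3, h4, rfl⟩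
      exact ⟨n, t, s, h1, h2, h3, h4, (prodeq n t s).symm⟩
  rw [hset]
  exact key_lemma (fun u => B u ω + μ / σ * u) hf σ
    (Real.log ((1 + γ) / (1 - γ)) / σ) T hσ hd hT
end
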